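/- arXiv:math/0205179 — 2 statements merged into one kernel-verified Lean document; each statement's English description precedes it below -/
import Mathlib

section
/- Let J be a subset of simple reflections and suppose w ∈ W has parabolic decomposition w = u·v with u ∈ W_J, v ∈ W^J, and additionally u is the unique maximal element of W_J below w in Bruhat order. Then the Poincaré polynomial factors: ∑_{x ≤ w} t^{ℓ(x)} = (∑_{y ≤ u} t^{ℓ(y)}) · (∑_{z ∈ W^J, z ≤ v} t^{ℓ(z)}). -/
variable {B : Type*} {W : Type*} [Group W] {M : CoxeterMatrix B}

/-- The standard parabolic subgroup `W_J` generated by the simple reflections in `J`. -/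
def parabolicSubgroup (cs : CoxeterSystem M W) (J : Set B) : Subgroup W :=
  Subgroup.closure (cs.simple '' J)

/-- Minimal-length representatives of the cosets `W_J\W`. -/
noncomputable def minCosetReps (cs : CoxeterSystem M W) (J : Set B) : Set W :=
  {v | ∀ u ∈ parabolicSubgroup cs J, cs.length v ≤ cs.length (u * v)}

/-- The Bruhat order on a Coxeter group. -/
def bruhatLE (cs : CoxeterSystem M W) : W → W → Prop :=
  Relation.ReflTransGen fun a b =>
    (∃ t, cs.IsReflection t ∧ b = t * a) ∧ cs.length a < cs.length b

namespace BruhatAux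

open CoxeterSystem List Classical

variable (cs : CoxeterSystem M W)

local prefix:100 "σ" => cs.simple
local prefix:100 "π" => cs.wordProd
local prefix:100 "ℓ" => cs.length

noncomputable local instance : DecidableEq W := Classical.decEq W

/-- The permutation of `W × Bool` attached to a simple reflection. -/
noncomputable def refPerm (i : B) : Equiv.Perm (W × Bool) :=
  Function.Involutive.toPerm
    (fun p => (σ i * p.1 * σ i, if p.1 = σ i then !p.2 else p.2))
    (by
      rintro ⟨t, ε⟩
      have h1 : σ i * (σ i * t * σ i) * σ i = t := by
        simp [mul_assoc, cs.simple_mul_simple_cancel_left]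
      have h2 : (σ i * t * σ i = σ i) ↔ (t = σ i) := by
        constructor
        · intro h
          have := congrArg (fun x => σ i * x * σ i) h
          simpa [h1, mul_assoc, cs.simple_mul_simple_cancel_left] using this
        · rintro rfl; simp [mul_assoc, cs.simple_mul_simple_cancel_left]
      simp only [h1, h2]
      by_cases h : t = σ i <;> simp [h])

@[simp] lemma refPerm_apply (i : B) (t : W) (ε : Bool) :
    refPerm cs i (t, ε) = (σ i * t * σ i, if t = σ i then !ε else ε) := rfl

/-- Product of the permutations attached to a word. -/
noncomputable def wordPerm (ω : List B) : Equiv.Perm (W × Bool) :=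
  (ω.map (refPerm cs)).prod

@[simp] lemma wordPerm_nil : wordPerm cs [] = 1 := rfl

lemma wordPerm_cons (i : B) (ω : List B) :
    wordPerm cs (i :: ω) = refPerm cs i * wordPerm cs ω := by
  simp [wordPerm]

lemma wordPerm_apply (ω : List B) (t : W) (ε : Bool) :
    wordPerm cs ω (t, ε) =
      (π ω * t * (π ω)⁻¹,
        if Odd ((cs.rightInvSeq ω).count t) then !ε else ε) := by
  induction ω generalizing t ε with
  | nil => simp
  | cons i ω ih =>
    rw [wordPerm_cons, Equiv.Perm.mul_apply, ih]
    rw [show cs.rightInvSeq (i :: ω) = (π ω)⁻¹ * σ i * π ω :: cs.rightInvSeq ω from rfl]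
    rw [refPerm_apply]
    have hfst : σ i * (π ω * t * (π ω)⁻¹) * σ i
        = π (i :: ω) * t * (π (i :: ω))⁻¹ := by
      rw [cs.wordProd_cons]
      simp [mul_assoc, cs.inv_simple]
    have hcond : (π ω * t * (π ω)⁻¹ = σ i) ↔ ((π ω)⁻¹ * σ i * π ω = t) := by
      constructor
      · intro h; rw [← h]; group
      · intro h; rw [← h]; group
    rw [List.count_cons]
    by_cases h : (π ω)⁻¹ * σ i * π ω = t
    · rw [if_pos (hcond.mpr h), hfst]
      have hbeq : (((π ω)⁻¹ * σ i * π ω == t) : Bool) = true := beq_iff_eq.mpr h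
      rw [hbeq, if_pos rfl]
      refine Prod.ext rfl ?_
      by_cases hodd : Odd (List.count t (cs.rightInvSeq ω)) <;>
        simp [hodd, Nat.odd_add_one, Nat.not_odd_iff_even]
    · rw [if_neg (fun hc => h (hcond.mp hc)), hfst]
      have hbeq : (((π ω)⁻¹ * σ i * π ω == t) : Bool) = false := by
        simpa using h
      rw [hbeq]
      simp

lemma alternatingWord_drop (i i' : B) (n k : ℕ) :
    (CoxeterSystem.alternatingWord i i' n).drop k = CoxeterSystem.alternatingWord i i' (n - k) := by
  induction k generalizing n with
  | zero => simp
  | succ k ih =>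
    cases n with
    | zero => simp [CoxeterSystem.alternatingWord]
    | succ n =>
      rw [CoxeterSystem.alternatingWord_succ' i i' n]
      rw [show n + 1 - (k + 1) = n - k by omega]
      rw [List.drop_succ_cons, ih n]

lemma simple_mul_zpow (i i' : B) (z : ℤ) :
    σ i' * (σ i * σ i') ^ z = (σ i * σ i') ^ (-z) * σ i' := by
  have h : (MulAut.conj (σ i')) (σ i * σ i') = (σ i * σ i')⁻¹ := by
    simp only [MulAut.conj_apply, cs.inv_simple, mul_inv_rev]
    rw [show σ i' * (σ i * σ i') * σ i' = σ i' * σ i * (σ i' * σ i') by group]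
    simp [cs.simple_mul_simple_self]
  have h2 := map_zpow (MulAut.conj (σ i')) (σ i * σ i') z
  rw [h, inv_zpow, ← zpow_neg] at h2
  simp only [MulAut.conj_apply, cs.inv_simple] at h2
  calc σ i' * (σ i * σ i') ^ z
      = (σ i' * (σ i * σ i') ^ z * σ i') * σ i' := by
        rw [mul_assoc, cs.simple_mul_simple_self, mul_one]
    _ = (σ i * σ i') ^ (-z) * σ i' := by rw [h2]

lemma alt_prod_inv_mul (i i' : B) (r : ℕ) :
    (π (CoxeterSystem.alternatingWord i i' r))⁻¹ * π (CoxeterSystem.alternatingWord i i' (r + 1))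
      = (σ i * σ i') ^ (-(r : ℤ)) * σ i' := by
  rcases Nat.even_or_odd' r with ⟨e, rfl | rfl⟩
  · rw [cs.prod_alternatingWord_eq_mul_pow, cs.prod_alternatingWord_eq_mul_pow]
    have h1 : ¬ Even (2 * e + 1) := by simp [Nat.even_add_one, parity_simps]
    have h2 : Even (2 * e) := even_two_mul e
    rw [if_pos h2, if_neg h1]
    have h3 : (2 * e + 1) / 2 = e := by omega
    have h4 : (2 * e) / 2 = e := by omega
    rw [h3, h4, one_mul]
    rw [← zpow_natCast (σ i * σ i') e]
    rw [simple_mul_zpow cs i i' (e : ℤ)]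
    rw [← zpow_neg, ← mul_assoc, ← zpow_add]
    congr 1
    push_cast
    ring
  · rw [cs.prod_alternatingWord_eq_mul_pow, cs.prod_alternatingWord_eq_mul_pow]
    have h1 : ¬ Even (2 * e + 1) := by simp [Nat.even_add_one, parity_simps]
    have h2 : Even (2 * e + 1 + 1) := by simp [Nat.even_add_one, parity_simps]
    rw [if_neg h1, if_pos h2]
    have h3 : (2 * e + 1) / 2 = e := by omega
    have h4 : (2 * e + 1 + 1) / 2 = e + 1 := by omega
    rw [h3, h4, one_mul, mul_inv_rev, cs.inv_simple]
    rw [← zpow_natCast (σ i * σ i') e, ← zpow_natCast (σ i * σ i') (e + 1)]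
    rw [← zpow_neg, mul_assoc, simple_mul_zpow cs i i' ((e + 1 : ℕ) : ℤ)]
    rw [← mul_assoc, ← zpow_add]
    congr 1
    push_cast
    ring

lemma ris_alternatingWord_getD (i i' : B) (n k : ℕ) (hk : k < n) :
    (cs.rightInvSeq (CoxeterSystem.alternatingWord i i' n)).getD k 1
      = (σ i * σ i') ^ (-((n - k - 1 : ℕ) : ℤ)) * σ i' := by
  set r := n - k - 1 with hr
  have hdrop : (CoxeterSystem.alternatingWord i i' n).drop (k + 1)
      = CoxeterSystem.alternatingWord i i' r := by
    rw [alternatingWord_drop]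
    have h0 : n - (k + 1) = r := by omega
    rw [h0]
  have hget : (CoxeterSystem.alternatingWord i i' n)[k]?
      = some (if Even r then i' else i) := by
    have h1 : (CoxeterSystem.alternatingWord i i' n)[k]?
        = ((CoxeterSystem.alternatingWord i i' n).drop k)[0]? := by
      simp [List.getElem?_drop]
    rw [h1, alternatingWord_drop]
    have : n - k = r + 1 := by omega
    rw [this, CoxeterSystem.alternatingWord_succ']
    rfl
  rw [cs.getD_rightInvSeq, hdrop, hget]
  simp only [Option.map_some, Option.getD_some]
  have hsucc : π (CoxeterSystem.alternatingWord i i' (r + 1))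
      = σ (if Even r then i' else i) * π (CoxeterSystem.alternatingWord i i' r) := by
    rw [CoxeterSystem.alternatingWord_succ', cs.wordProd_cons]
  have key := alt_prod_inv_mul cs i i' r
  rw [hsucc] at key
  rw [← mul_assoc] at key
  exact key

lemma count_ris_alternatingWord_even (i i' : B) (t : W) :
    Even ((cs.rightInvSeq (CoxeterSystem.alternatingWord i i' (2 * M i i'))).count t) := by
  set m := M i i' with hm
  set l := cs.rightInvSeq (CoxeterSystem.alternatingWord i i' (2 * m)) with hl
  have hlen : l.length = 2 * m := by simp [hl]
  have hq : (σ i * σ i') ^ (m : ℤ) = 1 := by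
    rw [zpow_natCast]
    exact cs.simple_mul_simple_pow i i' 
  have hgd : ∀ j, j < 2 * m → l.getD j 1
      = (σ i * σ i') ^ (-((2 * m - j - 1 : ℕ) : ℤ)) * σ i' := by
    intro j hj
    rw [hl]
    exact ris_alternatingWord_getD cs i i' (2 * m) j hj
  have htd : l.take m = l.drop m := by
    apply List.ext_getElem?
    intro j
    rcases lt_or_ge j m with hjm | hjm
    · have h1 : (l.take m)[j]? = l[j]? := by
        rw [List.getElem?_take]
        simp [hjm]
      have h2 : (l.drop m)[j]? = l[m + j]? := List.getElem?_drop (xs := l) (i := m) (j := j)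
      have h3 : l[j]? = some (l.getD j 1) := by
        rw [List.getElem?_eq_getElem (by omega : j < l.length)]
        rw [List.getD_eq_getElem l 1 (by omega)]
      have h4 : l[m + j]? = some (l.getD (m + j) 1) := by
        rw [List.getElem?_eq_getElem (by omega : m + j < l.length)]
        rw [List.getD_eq_getElem l 1 (by omega)]
      rw [h1, h2, h3, h4]
      rw [hgd j (by omega), hgd (m + j) (by omega)]
      have harith : (2 * m - j - 1) = (2 * m - (m + j) - 1) + m := by omega
      rw [harith]
      push_cast
      rw [neg_add, zpow_add, zpow_neg, zpow_neg, hq, inv_one, mul_one]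
    · have h1 : (l.take m)[j]? = none := by
        apply List.getElem?_eq_none
        simp only [List.length_take, hlen]
        omega
      have h2 : (l.drop m)[j]? = none := by
        apply List.getElem?_eq_none
        simp only [List.length_drop, hlen]
        omega
      rw [h1, h2]
  have hsplit : l = l.take m ++ l.take m := by
    nth_rw 1 [← List.take_append_drop m l, ← htd]
  rw [hsplit, List.count_append]
  exact ⟨l.take m |>.count t, by ring⟩

lemma refPerm_mul_pow (i i' : B) (m : ℕ) :
    (refPerm cs i * refPerm cs i') ^ m = wordPerm cs (CoxeterSystem.alternatingWord i i' (2 * m)) := by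
  induction m with
  | zero => simp [wordPerm, CoxeterSystem.alternatingWord]
  | succ m ih =>
    have h1 : 2 * (m + 1) = (2 * m + 1) + 1 := by omega
    rw [h1, CoxeterSystem.alternatingWord_succ', CoxeterSystem.alternatingWord_succ']
    have he1 : ¬ Even (2 * m + 1) := by simp [Nat.even_add_one, parity_simps]
    have he2 : Even (2 * m) := even_two_mul m
    rw [if_neg he1, if_pos he2]
    rw [wordPerm_cons, wordPerm_cons, ← ih, pow_succ']
    rw [mul_assoc]

lemma refPerm_liftable : M.IsLiftable (refPerm cs) := by
  intro i i'
  rw [refPerm_mul_pow]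
  apply Equiv.ext
  rintro ⟨t, ε⟩
  have hπ : π (CoxeterSystem.alternatingWord i i' (2 * M i i')) = 1 := by
    rw [cs.prod_alternatingWord_eq_mul_pow, if_pos (even_two_mul _)]
    rw [show 2 * M i i' / 2 = M i i' by omega, one_mul]
    exact cs.simple_mul_simple_pow i i'
  rw [wordPerm_apply, hπ]
  have hev := count_ris_alternatingWord_even cs i i' t
  rw [if_neg (by simpa [Nat.not_odd_iff_even] using hev)]
  simp

/-- The homomorphism from `W` to permutations of `W × Bool`. -/
noncomputable def nnHom : W →* Equiv.Perm (W × Bool) :=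
  cs.lift ⟨refPerm cs, refPerm_liftable cs⟩

/-- `nn cs w t = true` iff `t` is a "right inversion" of `w` (counted with parity). -/
noncomputable def nn (w t : W) : Bool := (nnHom cs w (t, false)).2

lemma nnHom_wordProd (ω : List B) : nnHom cs (π ω) = wordPerm cs ω := by
  unfold nnHom wordPerm CoxeterSystem.wordProd
  rw [map_list_prod]
  congr 1
  rw [List.map_map]
  apply List.map_congr_left
  intro i _
  simp [cs.lift_apply_simple]

lemma nn_iff_odd_count (ω : List B) (t : W) :
    nn cs (π ω) t = true ↔ Odd ((cs.rightInvSeq ω).count t) := by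
  unfold nn
  rw [nnHom_wordProd, wordPerm_apply]
  by_cases h : Odd ((cs.rightInvSeq ω).count t) <;> simp [h]

lemma nnHom_apply (w t : W) (ε : Bool) :
    nnHom cs w (t, ε) = (w * t * w⁻¹, if nn cs w t then !ε else ε) := by
  obtain ⟨ω, rfl⟩ := cs.wordProd_surjective w
  rw [nnHom_wordProd, wordPerm_apply]
  by_cases h : Odd ((cs.rightInvSeq ω).count t)
  · rw [if_pos h, if_pos (by rwa [nn_iff_odd_count])]
  · rw [if_neg h, if_neg (by rw [nn_iff_odd_count]; simpa using h)]

lemma nn_mul (a b t : W) :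
    nn cs (a * b) t = xor (nn cs a (b * t * b⁻¹)) (nn cs b t) := by
  have h0 : nn cs (a * b) t = (nnHom cs a ((nnHom cs b) (t, false))).2 := by
    unfold nn
    rw [map_mul, Equiv.Perm.mul_apply]
  have h1 : (nnHom cs b) (t, false) = (b * t * b⁻¹, nn cs b t) := by
    rw [nnHom_apply]
    cases h : nn cs b t <;> simp
  rw [h0, h1, nnHom_apply]
  cases ha : nn cs a (b * t * b⁻¹) <;> cases hb : nn cs b t <;> simp

lemma nn_one (t : W) : nn cs 1 t = false := by
  unfold nn
  rw [map_one]
  rfl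

lemma nn_simple (i : B) (t : W) : nn cs (cs.simple i) t = (decide (t = cs.simple i)) := by
  unfold nn nnHom
  rw [cs.lift_apply_simple]
  rw [refPerm_apply]
  by_cases h : t = cs.simple i <;> simp [h]

lemma nn_inv (w t : W) : nn cs w⁻¹ t = nn cs w (w⁻¹ * t * w) := by
  have h := nn_mul cs w w⁻¹ t
  rw [mul_inv_cancel, nn_one, inv_inv] at h
  cases h1 : nn cs w⁻¹ t <;> cases h2 : nn cs w (w⁻¹ * t * w) <;>
    rw [h1, h2] at h <;> simp_all

lemma nn_refl_self {t : W} (ht : cs.IsReflection t) : nn cs t t = true := by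
  obtain ⟨w, i, rfl⟩ := ht
  have hsplit : w * cs.simple i * w⁻¹ = w * (cs.simple i * w⁻¹) := by group
  rw [hsplit, nn_mul cs w (cs.simple i * w⁻¹)]
  have e1 : (cs.simple i * w⁻¹) * (w * (cs.simple i * w⁻¹)) * (cs.simple i * w⁻¹)⁻¹
      = cs.simple i := by
    rw [mul_inv_rev, inv_inv, cs.inv_simple]
    simp [mul_assoc, cs.simple_mul_simple_cancel_left]
  rw [e1]
  rw [nn_mul cs (cs.simple i) w⁻¹]
  rw [inv_inv]
  have e2 : w⁻¹ * (w * (cs.simple i * w⁻¹)) * w = cs.simple i := by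
    simp [mul_assoc]
  rw [e2, nn_simple]
  rw [nn_inv, e2]
  simp

lemma isRightInversion_of_nn {t : W} (w : W) (h : nn cs w t = true) :
    cs.IsRightInversion w t := by
  obtain ⟨ω, hω, rfl⟩ := cs.exists_reduced_word' w
  rw [nn_iff_odd_count] at h
  have hmem : t ∈ cs.rightInvSeq ω := by
    rw [← List.count_pos_iff]
    rcases h with ⟨c, hc⟩
    omega
  exact cs.isRightInversion_of_mem_rightInvSeq hω hmem

lemma nn_of_isRightInversion {t : W} (ht : cs.IsReflection t) (w : W)
    (h : cs.length (w * t) < cs.length w) : nn cs w t = true := by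
  by_contra hn
  rw [Bool.not_eq_true] at hn
  have e : t * t * t⁻¹ = t := by
    rw [ht.mul_self, one_mul, ht.inv]
  have key : nn cs (w * t) t = true := by
    rw [nn_mul, e, hn, nn_refl_self cs ht]
    simp
  have h2 := (isRightInversion_of_nn cs (w * t) key).2
  rw [mul_assoc, ht.mul_self, mul_one] at h2
  omega

/-- Right strong exchange. -/
lemma strong_exchange_right {t : W} (ht : cs.IsReflection t) (ω : List B)
    (h : cs.length (π ω * t) < cs.length (π ω)) :
    ∃ j < ω.length, π ω * t = π (ω.eraseIdx j) := by
  have hnn := nn_of_isRightInversion cs ht (π ω) h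
  rw [nn_iff_odd_count] at hnn
  have hmem : t ∈ cs.rightInvSeq ω := by
    rw [← List.count_pos_iff]
    rcases hnn with ⟨c, hc⟩
    omega
  obtain ⟨j, hj, hget⟩ := List.mem_iff_getElem.mp hmem
  rw [cs.length_rightInvSeq] at hj
  refine ⟨j, hj, ?_⟩
  rw [← cs.wordProd_mul_getD_rightInvSeq ω j]
  congr 1
  rw [List.getD_eq_getElem _ 1 (by rwa [cs.length_rightInvSeq])]
  exact hget.symm

/-- Left strong exchange. -/
lemma strong_exchange_left {t : W} (ht : cs.IsReflection t) (ω : List B)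
    (h : cs.length (t * π ω) < cs.length (π ω)) :
    ∃ j < ω.length, t * π ω = π (ω.eraseIdx j) := by
  have hrev : π (ω.reverse) = (π ω)⁻¹ := cs.wordProd_reverse ω
  have hlen : cs.length ((π ω)⁻¹ * t) < cs.length ((π ω)⁻¹) := by
    rw [cs.length_inv]
    calc cs.length ((π ω)⁻¹ * t) = cs.length (((π ω)⁻¹ * t)⁻¹) := (cs.length_inv _).symm
      _ = cs.length (t * π ω) := by rw [mul_inv_rev, inv_inv, ht.inv]
      _ < cs.length (π ω) := h
  have hnn := nn_of_isRightInversion cs ht ((π ω)⁻¹) hlen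
  rw [← hrev, nn_iff_odd_count] at hnn
  have hcount : (cs.leftInvSeq ω).count t = (cs.rightInvSeq ω.reverse).count t := by
    rw [cs.rightInvSeq_reverse, List.count_reverse]
  have hmem : t ∈ cs.leftInvSeq ω := by
    rw [← List.count_pos_iff, hcount]
    rcases hnn with ⟨c, hc⟩
    omega
  obtain ⟨j, hj, hget⟩ := List.mem_iff_getElem.mp hmem
  rw [cs.length_leftInvSeq] at hj
  refine ⟨j, hj, ?_⟩
  rw [← cs.getD_leftInvSeq_mul_wordProd ω j]
  congr 1
  rw [List.getD_eq_getElem _ 1 (by rwa [cs.length_leftInvSeq])]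
  exact hget.symm

/-! ### Bruhat order basics -/

lemma bruhat_refl (x : W) : bruhatLE cs x x := Relation.ReflTransGen.refl

lemma bruhat_trans {x y z : W} (h1 : bruhatLE cs x y) (h2 : bruhatLE cs y z) :
    bruhatLE cs x z := Relation.ReflTransGen.trans h1 h2

lemma bruhat_step {t a : W} (ht : cs.IsReflection t) (hl : cs.length a < cs.length (t * a)) :
    bruhatLE cs a (t * a) :=
  Relation.ReflTransGen.single ⟨⟨t, ht, rfl⟩, hl⟩

lemma bruhat_step_right {t a : W} (ht : cs.IsReflection t)
    (hl : cs.length a < cs.length (a * t)) : bruhatLE cs a (a * t) :=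
  Relation.ReflTransGen.single ⟨⟨a * t * a⁻¹, ht.conj a, by group⟩, hl⟩

lemma bruhat_length_le {x y : W} (h : bruhatLE cs x y) : cs.length x ≤ cs.length y := by
  induction h with
  | refl => exact le_refl _
  | tail _ hstep ih => exact ih.trans (le_of_lt hstep.2)

/-! ### Deletion property -/

lemma exists_reduced_sublist (ω : List B) :
    ∃ ρ, ρ <+ ω ∧ cs.IsReduced ρ ∧ π ρ = π ω := by
  induction ω using List.reverseRecOn with
  | nil => exact ⟨[], List.Sublist.refl _, by simp [CoxeterSystem.IsReduced], rfl⟩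
  | append_singleton γ i ih =>
    obtain ⟨ρ, hsub, hred, hprod⟩ := ih
    have hπ : π (γ ++ [i]) = π γ * σ i := by
      rw [cs.wordProd_append, cs.wordProd_singleton]
    rcases cs.length_mul_simple (π γ) i with h | h
    · refine ⟨ρ ++ [i], hsub.append (List.Sublist.refl _), ?_, ?_⟩
      · unfold CoxeterSystem.IsReduced
        rw [cs.wordProd_append, hprod, cs.wordProd_singleton, h]
        have : ℓ (π γ) = ρ.length := by rw [← hprod]; exact hred
        simp [this]
      · rw [cs.wordProd_append, hprod, cs.wordProd_singleton, hπ]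
    · have hne := cs.length_mul_simple_ne (π γ) i
      have hlt : ℓ (π γ * σ i) < ℓ (π γ) := by
        rcases Nat.eq_zero_or_pos (ℓ (π γ)) with h0 | h0
        · exact absurd (by omega) hne
        · omega
      obtain ⟨j, hj, heq⟩ := strong_exchange_right cs (cs.isReflection_simple i) ρ
        (by rw [hprod]; exact hlt)
      refine ⟨ρ.eraseIdx j, ((ρ.eraseIdx_sublist j).trans hsub).trans
        (List.sublist_append_left γ [i]), ?_, ?_⟩
      · unfold CoxeterSystem.IsReduced
        rw [← heq, hprod]
        have h1 : (ρ.eraseIdx j).length + 1 = ρ.length := List.length_eraseIdx_add_one hj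
        have h2 : ρ.length = ℓ (π γ) := by rw [← hprod]; exact hred.symm
        omega
      · rw [← heq, hprod, hπ]

/-! ### Subword property (hard direction: below implies subword) -/

lemma subword_of_le {x w : W} (h : bruhatLE cs x w) :
    ∀ ω : List B, cs.IsReduced ω → π ω = w →
      ∃ ρ, ρ <+ ω ∧ cs.IsReduced ρ ∧ π ρ = x := by
  induction h using Relation.ReflTransGen.head_induction_on with
  | refl => exact fun ω hred hw => ⟨ω, List.Sublist.refl _, hred, hw⟩
  | head hstep _ ih =>
    intro ω hred hw
    obtain ⟨ρc, hsubc, hredc, hprodc⟩ := ih ω hred hw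
    obtain ⟨⟨t, htrefl, rfl⟩, hlen⟩ := hstep
    obtain ⟨j, hj, heq⟩ := strong_exchange_left cs htrefl ρc
      (by
        rw [hprodc]
        rwa [← mul_assoc, htrefl.mul_self, one_mul])
    rw [hprodc, ← mul_assoc, htrefl.mul_self, one_mul] at heq
    obtain ⟨ρ, hsub2, hred2, hprod2⟩ := exists_reduced_sublist cs (ρc.eraseIdx j)
    exact ⟨ρ, (hsub2.trans (ρc.eraseIdx_sublist j)).trans hsubc, hred2, by rw [hprod2, ← heq]⟩

/-! ### Diamond lemma -/

lemma diamond {x y r : W} (hr : cs.IsReflection r) (i : B) (hxy : y = r * x)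
    (hlyx : ℓ y < ℓ x) (hy : ℓ y < ℓ (σ i * y)) (hx : ℓ (σ i * x) < ℓ x) :
    bruhatLE cs (σ i * y) x := by
  have hsy1 : ℓ (σ i * y) = ℓ y + 1 := by
    rcases cs.length_simple_mul y i with h | h <;> omega
  have hsx1 : ℓ x = ℓ (σ i * x) + 1 := by
    rcases cs.length_simple_mul x i with h | h <;> omega
  rcases lt_trichotomy (ℓ (σ i * y)) (ℓ (σ i * x)) with hlt | heq | hgt
  · have e : σ i * x = (σ i * r * σ i) * (σ i * y) := by
      rw [hxy]
      simp only [mul_assoc, cs.simple_mul_simple_cancel_left]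
      rw [← mul_assoc r r x, hr.mul_self, one_mul]
    have hrefl2 : cs.IsReflection (σ i * r * σ i) := by
      have := hr.conj (σ i)
      rwa [cs.inv_simple] at this
    have step1 : bruhatLE cs (σ i * y) (σ i * x) := by
      rw [e]
      exact bruhat_step cs hrefl2 (by rw [← e]; exact hlt)
    have step2 : bruhatLE cs (σ i * x) x := by
      have e2 : x = σ i * (σ i * x) := by rw [cs.simple_mul_simple_cancel_left]
      nth_rw 2 [e2]
      exact bruhat_step cs (cs.isReflection_simple i) (by rw [← e2]; exact hx)
    exact bruhat_trans cs step1 step2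
  · exfalso
    obtain ⟨c, hc⟩ := hr.odd_length
    have hpar := cs.length_mul_mod_two r x
    rw [← hxy] at hpar
    omega
  · have hlx : ℓ x = ℓ y + 1 := by omega
    obtain ⟨ω₀, hred₀, hprod₀⟩ := cs.exists_reduced_word' (σ i * x)
    have hword : π (i :: ω₀) = x := by
      rw [cs.wordProd_cons, ← hprod₀, cs.simple_mul_simple_cancel_left]
    have hlω : ω₀.length = ℓ (σ i * x) := by rw [hprod₀]; exact hred₀.symm
    obtain ⟨j, hj, heq2⟩ := strong_exchange_left cs hr (i :: ω₀)
      (by rw [hword, ← hxy]; exact hlyx)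
    rw [hword, ← hxy] at heq2
    cases j with
    | zero =>
      have hy2 : y = σ i * x := by
        rw [heq2, List.eraseIdx_cons_zero, ← hprod₀]
      have : σ i * y = x := by rw [hy2, cs.simple_mul_simple_cancel_left]
      rw [this]
      exact bruhat_refl cs x
    | succ j' =>
      exfalso
      rw [List.eraseIdx_cons_succ, cs.wordProd_cons] at heq2
      have hsy : σ i * y = π (ω₀.eraseIdx j') := by
        rw [heq2, cs.simple_mul_simple_cancel_left]
      have hj' : j' < ω₀.length := by simpa using hj
      have h1 : (ω₀.eraseIdx j').length + 1 = ω₀.length := List.length_eraseIdx_add_one hj'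
      have h2 : ℓ (σ i * y) ≤ (ω₀.eraseIdx j').length := by
        rw [hsy]
        exact cs.length_wordProd_le _
      omega

/-! ### Lifting property (mutual induction) -/

lemma lift_aux (n : ℕ) :
    (∀ (i : B) (u v : W), ℓ v ≤ n → bruhatLE cs u v → ℓ v < ℓ (σ i * v) →
      bruhatLE cs (σ i * u) (σ i * v)) ∧
    (∀ (i : B) (u x : W), ℓ x ≤ n → ℓ (σ i * x) < ℓ x → bruhatLE cs u x →
      ℓ u < ℓ (σ i * u) → bruhatLE cs (σ i * u) x) := by
  induction n using Nat.strong_induction_on with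
  | _ n ih =>
    constructor
    · intro i u v hv huv hsv
      rcases Relation.ReflTransGen.cases_tail huv with rfl | ⟨x, hux, hstep⟩
      · exact bruhat_refl cs _
      · obtain ⟨⟨t, ht, rfl⟩, hlx⟩ := hstep
        have hn : 0 < n := by omega
        obtain ⟨LU', CL'⟩ := ih (n - 1) (by omega)
        rcases Nat.lt_or_ge (ℓ x) (ℓ (σ i * x)) with hsx | hsx'
        · have h1 : bruhatLE cs (σ i * u) (σ i * x) := LU' i u x (by omega) hux hsx
          have hrefl2 : cs.IsReflection (σ i * t * σ i) := by
            have := ht.conj (σ i)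
            rwa [cs.inv_simple] at this
          have e : σ i * (t * x) = (σ i * t * σ i) * (σ i * x) := by
            simp [mul_assoc, cs.simple_mul_simple_cancel_left]
          have hsx1 : ℓ (σ i * x) = ℓ x + 1 := by
            rcases cs.length_simple_mul x i with h | h <;> omega
          have hsv1 : ℓ (σ i * (t * x)) = ℓ (t * x) + 1 := by
            rcases cs.length_simple_mul (t * x) i with h | h <;> omega
          have step2 : bruhatLE cs (σ i * x) (σ i * (t * x)) := by
            rw [e]
            exact bruhat_step cs hrefl2 (by rw [← e]; omega)
          exact bruhat_trans cs h1 step2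
        · have hsx : ℓ (σ i * x) < ℓ x := by
            have := cs.length_simple_mul_ne x i
            omega
          rcases Nat.lt_or_ge (ℓ u) (ℓ (σ i * u)) with hsu | hsu'
          · have h1 : bruhatLE cs (σ i * u) x := CL' i u x (by omega) hsx hux hsu
            have step2 : bruhatLE cs x (t * x) := bruhat_step cs ht hlx
            have step3 : bruhatLE cs (t * x) (σ i * (t * x)) :=
              bruhat_step cs (cs.isReflection_simple i) hsv
            exact bruhat_trans cs h1 (bruhat_trans cs step2 step3)
          · have hsu : ℓ (σ i * u) < ℓ u := by
              have := cs.length_simple_mul_ne u i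
              omega
            have step0 : bruhatLE cs (σ i * u) u := by
              have e2 : u = σ i * (σ i * u) := by rw [cs.simple_mul_simple_cancel_left]
              nth_rw 2 [e2]
              exact bruhat_step cs (cs.isReflection_simple i) (by rw [← e2]; exact hsu)
            have step2 : bruhatLE cs x (t * x) := bruhat_step cs ht hlx
            have step3 : bruhatLE cs (t * x) (σ i * (t * x)) :=
              bruhat_step cs (cs.isReflection_simple i) hsv
            exact bruhat_trans cs step0 (bruhat_trans cs hux
              (bruhat_trans cs step2 step3))
    · intro i u x hx hsx hux hsu
      rcases Relation.ReflTransGen.cases_tail hux with rfl | ⟨y, huy, hstep⟩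
      · omega
      · obtain ⟨⟨r, hr, rfl⟩, hly⟩ := hstep
        have hn : 0 < n := by omega
        obtain ⟨LU', CL'⟩ := ih (n - 1) (by omega)
        rcases Nat.lt_or_ge (ℓ (σ i * y)) (ℓ y) with hsy | hsy'
        · have h1 : bruhatLE cs (σ i * u) y := CL' i u y (by omega) hsy huy hsu
          exact bruhat_trans cs h1 (bruhat_step cs hr hly)
        · have hsy : ℓ y < ℓ (σ i * y) := by
            have := cs.length_simple_mul_ne y i
            omega
          have h1 : bruhatLE cs (σ i * u) (σ i * y) := LU' i u y (by omega) huy hsy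
          have hd : bruhatLE cs (σ i * y) (r * y) :=
            diamond cs hr i (by rw [← mul_assoc, hr.mul_self, one_mul]) hly hsy hsx
          exact bruhat_trans cs h1 hd

/-! ### Subword property (easy direction: subword implies below) -/

lemma le_of_sublist_reduced {ω ω' : List B} (hred : cs.IsReduced ω) (hsub : ω' <+ ω) :
    bruhatLE cs (π ω') (π ω) := by
  induction ω generalizing ω' with
  | nil =>
    rw [List.sublist_nil.mp hsub]
    exact bruhat_refl cs _
  | cons i ω₁ ih =>
    have hred₁ : cs.IsReduced ω₁ := by
      have := hred.drop 1
      simpa using this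
    have hsv : ℓ (π ω₁) < ℓ (σ i * π ω₁) := by
      have h1 : ℓ (π (i :: ω₁)) = ω₁.length + 1 := by
        rw [hred]
        simp
      have h2 : ℓ (π ω₁) = ω₁.length := hred₁
      rw [cs.wordProd_cons] at h1
      omega
    rcases List.sublist_cons_iff.mp hsub with h | ⟨ρ, rfl, hρ⟩
    · have step : bruhatLE cs (π ω₁) (π (i :: ω₁)) := by
        rw [cs.wordProd_cons]
        exact bruhat_step cs (cs.isReflection_simple i) hsv
      exact bruhat_trans cs (ih hred₁ h) step
    · have := (lift_aux cs (ℓ (π ω₁))).1 i (π ρ) (π ω₁) le_rfl (ih hred₁ hρ) hsv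
      rw [cs.wordProd_cons, cs.wordProd_cons]
      exact this

/-! ### Parabolic subgroups -/

lemma wordProd_mem_parabolic (J : Set B) {α : List B} (hα : ∀ j ∈ α, j ∈ J) :
    π α ∈ parabolicSubgroup cs J := by
  induction α with
  | nil =>
    rw [cs.wordProd_nil]
    exact Subgroup.one_mem _
  | cons i α ih =>
    rw [cs.wordProd_cons]
    refine Subgroup.mul_mem _ (Subgroup.subset_closure ⟨i, hα i List.mem_cons_self, rfl⟩)
      (ih fun j hj => hα j (List.mem_cons_of_mem _ hj))

lemma exists_word_of_mem_parabolic {J : Set B} {a : W} (ha : a ∈ parabolicSubgroup cs J) :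
    ∃ α : List B, (∀ j ∈ α, j ∈ J) ∧ π α = a := by
  induction ha using Subgroup.closure_induction with
  | mem x hx =>
    obtain ⟨i, hi, rfl⟩ := hx
    exact ⟨[i], by simpa using hi, by simp⟩
  | one => exact ⟨[], by simp, by simp⟩
  | mul x y hx hy ihx ihy =>
    obtain ⟨αx, hx1, hx2⟩ := ihx
    obtain ⟨αy, hy1, hy2⟩ := ihy
    refine ⟨αx ++ αy, ?_, by rw [cs.wordProd_append, hx2, hy2]⟩
    intro j hj
    rcases List.mem_append.mp hj with h | h
    · exact hx1 j h
    · exact hy1 j h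
  | inv x hx ihx =>
    obtain ⟨αx, hx1, hx2⟩ := ihx
    refine ⟨αx.reverse, ?_, by rw [cs.wordProd_reverse, hx2]⟩
    intro j hj
    exact hx1 j (List.mem_reverse.mp hj)

lemma exists_reduced_word_parabolic {J : Set B} {a : W} (ha : a ∈ parabolicSubgroup cs J) :
    ∃ α : List B, (∀ j ∈ α, j ∈ J) ∧ cs.IsReduced α ∧ π α = a := by
  obtain ⟨α, hαJ, hαprod⟩ := exists_word_of_mem_parabolic cs ha
  obtain ⟨ρ, hsub, hred, hprod⟩ := exists_reduced_sublist cs α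
  exact ⟨ρ, fun j hj => hαJ j (hsub.subset hj), hred, by rw [hprod, hαprod]⟩

lemma mem_parabolic_of_le {J : Set B} {u y : W} (hu : u ∈ parabolicSubgroup cs J)
    (hy : bruhatLE cs y u) : y ∈ parabolicSubgroup cs J := by
  obtain ⟨α, hαJ, hαred, hαprod⟩ := exists_reduced_word_parabolic cs hu
  obtain ⟨ρ, hsub, _, hprod⟩ := subword_of_le cs hy α hαred hαprod
  rw [← hprod]
  exact wordProd_mem_parabolic cs J fun j hj => hαJ j (hsub.subset hj)

/-- Key additivity: `ℓ(ab) = ℓ(a) + ℓ(b)` for `a` in the parabolic and `b` a minimal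
coset representative. -/
lemma length_parabolic_mul {J : Set B} {a b : W} (ha : a ∈ parabolicSubgroup cs J)
    (hb : b ∈ minCosetReps cs J) : ℓ (a * b) = ℓ a + ℓ b := by
  generalize hn : ℓ a = n
  induction n using Nat.strong_induction_on generalizing a with
  | _ n ih =>
    rcases Nat.eq_zero_or_pos n with rfl | hpos
    · have : a = 1 := cs.length_eq_zero_iff.mp hn
      rw [this]
      simp
    · obtain ⟨α, hαJ, hαred, hαprod⟩ := exists_reduced_word_parabolic cs ha
      have hαlen : α.length = n := by rw [← hn, ← hαprod]; exact hαred.symm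
      cases α with
      | nil => simp at hαlen; omega
      | cons i α₁ =>
        set a' := π α₁ with ha'def
        have hα₁red : cs.IsReduced α₁ := by
          have := hαred.drop 1
          simpa using this
        have hα₁J : ∀ j ∈ α₁, j ∈ J := fun j hj => hαJ j (List.mem_cons_of_mem _ hj)
        have ha' : a' ∈ parabolicSubgroup cs J := wordProd_mem_parabolic cs J hα₁J
        have hiJ : i ∈ J := hαJ i List.mem_cons_self
        have hsa : a = σ i * a' := by rw [← hαprod, cs.wordProd_cons]
        have hla' : ℓ a' = n - 1 := by
          rw [ha'def, hα₁red]
          simp at hαlen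
          omega
        have hIH : ℓ (a' * b) = ℓ a' + ℓ b := by
          rw [hla']
          exact ih (n - 1) (by omega) ha' hla'
        obtain ⟨β, hβred, hβprod⟩ := cs.exists_reduced_word' b
        have hγred : cs.IsReduced (α₁ ++ β) := by
          unfold CoxeterSystem.IsReduced
          rw [cs.wordProd_append, ← ha'def, ← hβprod, hIH, List.length_append]
          have h1 : ℓ a' = α₁.length := by rw [ha'def]; exact hα₁red
          have h2 : ℓ b = β.length := by rw [hβprod]; exact hβred
          omega
      -- claim: σ i is not a left descent of a' * b
        have hkey : ℓ (σ i * (a' * b)) = ℓ (a' * b) + 1 := by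
          by_contra hne
          have hlt : ℓ (σ i * (a' * b)) < ℓ (a' * b) := by
            rcases cs.length_simple_mul (a' * b) i with h | h <;> omega
          have hprodγ : π (α₁ ++ β) = a' * b := by
            rw [cs.wordProd_append, ← ha'def, ← hβprod]
          obtain ⟨j, hj, heq⟩ := strong_exchange_left cs (cs.isReflection_simple i)
            (α₁ ++ β) (by rw [hprodγ]; exact hlt)
          rw [hprodγ] at heq
          rw [List.length_append] at hj
          rcases Nat.lt_or_ge j α₁.length with hjlt | hjge
          · rw [List.eraseIdx_append_of_lt_length hjlt] at heq
            rw [cs.wordProd_append] at heq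
            have hcancel : σ i * a' = π (α₁.eraseIdx j) := by
              have := heq
              rw [← hβprod, ← mul_assoc] at this
              exact mul_right_cancel this
            have hlen1 : ℓ (σ i * a') ≤ (α₁.eraseIdx j).length := by
              rw [hcancel]
              exact cs.length_wordProd_le _
            have hlen2 : (α₁.eraseIdx j).length + 1 = α₁.length := List.length_eraseIdx_add_one hjlt
            have : ℓ a ≤ n - 2 := by
              rw [hsa]
              simp at hαlen
              omega
            omega
          · rw [List.eraseIdx_append_of_length_le hjge] at heq
            rw [cs.wordProd_append, ← ha'def] at heq
            have hb' : π (β.eraseIdx (j - α₁.length)) = (a'⁻¹ * σ i * a') * b := by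
              rw [show (a'⁻¹ * σ i * a') * b = a'⁻¹ * (σ i * (a' * b)) by group, heq]
              group
            have hu' : a'⁻¹ * σ i * a' ∈ parabolicSubgroup cs J :=
              Subgroup.mul_mem _ (Subgroup.mul_mem _ (Subgroup.inv_mem _ ha')
                (Subgroup.subset_closure ⟨i, hiJ, rfl⟩)) ha'
            have hmcr := hb _ hu'
            have hlen1 : ℓ ((a'⁻¹ * σ i * a') * b) ≤ (β.eraseIdx (j - α₁.length)).length := by
              rw [← hb']
              exact cs.length_wordProd_le _
            have hjβ : j - α₁.length < β.length := by omega
            have hlen2 : (β.eraseIdx (j - α₁.length)).length + 1 = β.length :=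
              List.length_eraseIdx_add_one hjβ
            have hlb : ℓ b = β.length := by rw [hβprod]; exact hβred
            omega
        have hsab : ℓ (a * b) = ℓ (σ i * (a' * b)) := by
          rw [hsa, mul_assoc]
        rw [hsab, hkey, hIH]
        omega

/-- Existence of the parabolic coset decomposition. -/
lemma exists_decomp (J : Set B) (x : W) :
    ∃ a b : W, a ∈ parabolicSubgroup cs J ∧ b ∈ minCosetReps cs J ∧ x = a * b ∧
      ℓ x = ℓ a + ℓ b := by
  classical
  set S : Set ℕ := {n | ∃ p ∈ parabolicSubgroup cs J, ℓ (p * x) = n} with hS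
  have hne : S.Nonempty := ⟨ℓ x, 1, Subgroup.one_mem _, by simp⟩
  obtain ⟨p₀, hp₀, hlp⟩ := Nat.sInf_mem hne
  have hb : p₀ * x ∈ minCosetReps cs J := by
    intro q hq
    rw [hlp]
    apply Nat.sInf_le
    exact ⟨q * p₀, Subgroup.mul_mem _ hq hp₀, by rw [mul_assoc]⟩
  refine ⟨p₀⁻¹, p₀ * x, Subgroup.inv_mem _ hp₀, hb, by group, ?_⟩
  nth_rw 1 [show x = p₀⁻¹ * (p₀ * x) by group]
  exact length_parabolic_mul cs (Subgroup.inv_mem _ hp₀) hb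

/-- Uniqueness of the parabolic coset decomposition. -/
lemma decomp_unique {J : Set B} {a b a' b' : W} (ha : a ∈ parabolicSubgroup cs J)
    (hb : b ∈ minCosetReps cs J) (ha' : a' ∈ parabolicSubgroup cs J)
    (hb' : b' ∈ minCosetReps cs J) (h : a * b = a' * b') : a = a' ∧ b = b' := by
  set q := a'⁻¹ * a with hq
  have hqP : q ∈ parabolicSubgroup cs J := Subgroup.mul_mem _ (Subgroup.inv_mem _ ha') ha
  have hqb : q * b = b' := by
    rw [hq, mul_assoc, h]
    group
  have h1 : ℓ (q * b) = ℓ q + ℓ b := length_parabolic_mul cs hqP hb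
  have h2 : ℓ (q⁻¹ * b') = ℓ q⁻¹ + ℓ b' := length_parabolic_mul cs (Subgroup.inv_mem _ hqP) hb'
  have hqb' : q⁻¹ * b' = b := by rw [← hqb]; group
  have hlq : ℓ q = 0 := by
    rw [hqb] at h1
    rw [hqb', cs.length_inv] at h2
    omega
  have hq1 : q = 1 := cs.length_eq_zero_iff.mp hlq
  constructor
  · have : a'⁻¹ * a = 1 := hq1
    calc a = a' * (a'⁻¹ * a) := by group
    _ = a' := by rw [this, mul_one]
  · rw [← hqb, hq1, one_mul]

/-! ### Projections onto the two factors -/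

noncomputable def pPart (J : Set B) (x : W) : W := (exists_decomp cs J x).choose

noncomputable def mPart (J : Set B) (x : W) : W :=
  (exists_decomp cs J x).choose_spec.choose

lemma part_spec (J : Set B) (x : W) :
    pPart cs J x ∈ parabolicSubgroup cs J ∧ mPart cs J x ∈ minCosetReps cs J ∧
      x = pPart cs J x * mPart cs J x ∧ ℓ x = ℓ (pPart cs J x) + ℓ (mPart cs J x) := by
  obtain ⟨h1, h2, h3, h4⟩ := (exists_decomp cs J x).choose_spec.choose_spec
  exact ⟨h1, h2, h3, h4⟩

lemma parts_eq {J : Set B} {x a b : W} (ha : a ∈ parabolicSubgroup cs J)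
    (hb : b ∈ minCosetReps cs J) (h : x = a * b) :
    pPart cs J x = a ∧ mPart cs J x = b := by
  obtain ⟨h1, h2, h3, _⟩ := part_spec cs J x
  exact decomp_unique cs h1 h2 ha hb (by rw [← h3, ← h])

lemma pPart_le (J : Set B) (x : W) : bruhatLE cs (pPart cs J x) x := by
  obtain ⟨h1, h2, h3, h4⟩ := part_spec cs J x
  obtain ⟨α, hαJ, hαred, hαprod⟩ := exists_reduced_word_parabolic cs h1
  obtain ⟨β, hβred, hβprod⟩ := cs.exists_reduced_word' (mPart cs J x)
  have hαβ : cs.IsReduced (α ++ β) := by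
    unfold CoxeterSystem.IsReduced
    rw [cs.wordProd_append, hαprod, ← hβprod, ← h3, h4, List.length_append]
    have e1 : ℓ (pPart cs J x) = α.length := by rw [← hαprod]; exact hαred
    have e2 : ℓ (mPart cs J x) = β.length := by rw [hβprod]; exact hβred
    omega
  have := le_of_sublist_reduced cs hαβ (List.sublist_append_left α β)
  rwa [hαprod, cs.wordProd_append, hαprod, ← hβprod, ← h3] at this

lemma mPart_le_self (J : Set B) (x : W) : bruhatLE cs (mPart cs J x) x := by
  obtain ⟨h1, h2, h3, h4⟩ := part_spec cs J x
  obtain ⟨α, hαJ, hαred, hαprod⟩ := exists_reduced_word_parabolic cs h1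
  obtain ⟨β, hβred, hβprod⟩ := cs.exists_reduced_word' (mPart cs J x)
  have hαβ : cs.IsReduced (α ++ β) := by
    unfold CoxeterSystem.IsReduced
    rw [cs.wordProd_append, hαprod, ← hβprod, ← h3, h4, List.length_append]
    have e1 : ℓ (pPart cs J x) = α.length := by rw [← hαprod]; exact hαred
    have e2 : ℓ (mPart cs J x) = β.length := by rw [hβprod]; exact hβred
    omega
  have := le_of_sublist_reduced cs hαβ (List.sublist_append_right α β)
  rwa [← hβprod, cs.wordProd_append, hαprod, ← hβprod, ← h3] at this

/-- If `y ≤ u` and `z ≤ v` with `ℓ(uv) = ℓ(u) + ℓ(v)` and `u` in the parabolic,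
then `yz ≤ uv`. -/
lemma prod_le {J : Set B} {u v y z : W} (hu : u ∈ parabolicSubgroup cs J)
    (hadd : ℓ (u * v) = ℓ u + ℓ v) (hy : bruhatLE cs y u) (hz : bruhatLE cs z v) :
    bruhatLE cs (y * z) (u * v) := by
  obtain ⟨α, hαJ, hαred, hαprod⟩ := exists_reduced_word_parabolic cs hu
  obtain ⟨β, hβred, hβprod⟩ := cs.exists_reduced_word' v
  have hαβ : cs.IsReduced (α ++ β) := by
    unfold CoxeterSystem.IsReduced
    rw [cs.wordProd_append, hαprod, ← hβprod, hadd, List.length_append]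
    have e1 : ℓ u = α.length := by rw [← hαprod]; exact hαred
    have e2 : ℓ v = β.length := by rw [hβprod]; exact hβred
    omega
  obtain ⟨ρ₁, hs1, _, hp1⟩ := subword_of_le cs hy α hαred hαprod
  obtain ⟨ρ₂, hs2, _, hp2⟩ := subword_of_le cs hz β hβred hβprod.symm
  have := le_of_sublist_reduced cs hαβ (hs1.append hs2)
  rwa [cs.wordProd_append, cs.wordProd_append, hp1, hp2, hαprod, ← hβprod] at this

/-- Monotonicity of the projection below `u * v`. -/
lemma mPart_le_of_le {J : Set B} {u v x : W} (hu : u ∈ parabolicSubgroup cs J)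
    (hadd : ℓ (u * v) = ℓ u + ℓ v) (hx : bruhatLE cs x (u * v)) :
    bruhatLE cs (mPart cs J x) v := by
  obtain ⟨α, hαJ, hαred, hαprod⟩ := exists_reduced_word_parabolic cs hu
  obtain ⟨β, hβred, hβprod⟩ := cs.exists_reduced_word' v
  have hαβ : cs.IsReduced (α ++ β) := by
    unfold CoxeterSystem.IsReduced
    rw [cs.wordProd_append, hαprod, ← hβprod, hadd, List.length_append]
    have e1 : ℓ u = α.length := by rw [← hαprod]; exact hαred
    have e2 : ℓ v = β.length := by rw [hβprod]; exact hβred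
    omega
  obtain ⟨ρ, hsub, hρred, hρprod⟩ := subword_of_le cs hx (α ++ β) hαβ
    (by rw [cs.wordProd_append, hαprod, ← hβprod])
  obtain ⟨ρ₁, ρ₂, rfl, hs1, hs2⟩ := List.sublist_append_iff.mp hsub
  have hy : bruhatLE cs (π ρ₂) v := by
    have := le_of_sublist_reduced cs hβred hs2
    rwa [← hβprod] at this
  have hρ₁P : π ρ₁ ∈ parabolicSubgroup cs J :=
    wordProd_mem_parabolic cs J fun j hj => hαJ j (hs1.subset hj)
  obtain ⟨g1, g2, g3, g4⟩ := part_spec cs J (π ρ₂)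
  have hx_eq : x = (π ρ₁ * pPart cs J (π ρ₂)) * mPart cs J (π ρ₂) := by
    rw [← hρprod, cs.wordProd_append, mul_assoc, ← g3]
  have := parts_eq cs (Subgroup.mul_mem _ hρ₁P g1) g2 hx_eq
  rw [this.2]
  exact bruhat_trans cs (mPart_le_self cs J (π ρ₂)) hy

end BruhatAux

open scoped Classical in
/-- factorization of the Poincaré polynomial when `u = m(w,J)` is the
maximal element of `W_J` below `w`. -/
theorem poincare_factorization
    [Fintype W] (cs : CoxeterSystem M W) (J : Set B) (w u v : W)
    (hu : u ∈ parabolicSubgroup cs J) (hv : v ∈ minCosetReps cs J)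
    (hw : w = u * v) (hl : cs.length w = cs.length u + cs.length v)
    (hmax : ∀ y ∈ parabolicSubgroup cs J, bruhatLE cs y w → bruhatLE cs y u) :
    ∑ x ∈ Finset.univ.filter (fun x => bruhatLE cs x w),
        (Polynomial.X : Polynomial ℤ) ^ cs.length x =
      (∑ y ∈ Finset.univ.filter (fun y => bruhatLE cs y u),
          (Polynomial.X : Polynomial ℤ) ^ cs.length y) *
      (∑ z ∈ Finset.univ.filter
            (fun z => z ∈ minCosetReps cs J ∧ bruhatLE cs z v),
          (Polynomial.X : Polynomial ℤ) ^ cs.length z) := by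
  classical
  have hadd : cs.length (u * v) = cs.length u + cs.length v := by rw [← hw]; exact hl
  rw [Finset.sum_mul_sum]
  rw [← Finset.sum_product']
  refine Finset.sum_nbij' (fun x => (BruhatAux.pPart cs J x, BruhatAux.mPart cs J x))
    (fun p => p.1 * p.2) ?_ ?_ ?_ ?_ ?_
  · intro x hx
    rw [Finset.mem_filter] at hx
    obtain ⟨p1, p2, p3, p4⟩ := BruhatAux.part_spec cs J x
    rw [Finset.mem_product, Finset.mem_filter, Finset.mem_filter]
    refine ⟨⟨Finset.mem_univ _, ?_⟩, Finset.mem_univ _, p2, ?_⟩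
    · exact hmax _ p1 (BruhatAux.bruhat_trans cs (BruhatAux.pPart_le cs J x) hx.2)
    · rw [hw] at hx
      exact BruhatAux.mPart_le_of_le cs hu hadd hx.2
  · intro p hp
    rw [Finset.mem_product, Finset.mem_filter, Finset.mem_filter] at hp
    rw [Finset.mem_filter]
    refine ⟨Finset.mem_univ _, ?_⟩
    rw [hw]
    exact BruhatAux.prod_le cs hu hadd hp.1.2 hp.2.2.2
  · intro x hx
    obtain ⟨p1, p2, p3, p4⟩ := BruhatAux.part_spec cs J x
    exact p3.symm
  · intro p hp
    rw [Finset.mem_product, Finset.mem_filter, Finset.mem_filter] at hp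
    have hyP : p.1 ∈ parabolicSubgroup cs J :=
      BruhatAux.mem_parabolic_of_le cs hu hp.1.2
    have := BruhatAux.parts_eq cs hyP hp.2.2.1 (rfl : p.1 * p.2 = p.1 * p.2)
    exact Prod.ext this.1 this.2
  · intro x hx
    obtain ⟨p1, p2, p3, p4⟩ := BruhatAux.part_spec cs J x
    rw [p4, pow_add]
end

section
/- Let w = u·v with u ∈ W_J, v ∈ W^J be a parabolic decomposition where u = m(w,J) is the maximal element of W_J below w. Then the map x ↦ (y, z), where x = yz is the parabolic decomposition of x with y ∈ W_J, z ∈ W^J, is a bijection from {x ∈ W : x ≤ w} to {y ∈ W_J : y ≤ u} × {z ∈ W^J : z ≤ v}, and it preserves length in the sense that ℓ(x) = ℓ(y) + ℓ(z). -/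
variable {B : Type*} {W : Type*} [Group W] {M : CoxeterMatrix B}

namespace CoxAux

open CoxeterSystem List

noncomputable section

open scoped Classical

variable {B : Type*} {W : Type*} [Group W] {M : CoxeterMatrix B} (cs : CoxeterSystem M W)

local prefix:100 "s" => cs.simple
local prefix:100 "π" => cs.wordProd
local prefix:100 "ℓ" => cs.length
local prefix:100 "ris" => cs.rightInvSeq
local prefix:100 "lis" => cs.leftInvSeq

/-- The function underlying the permutation `eta i` of `W × ℤˣ`. -/
def etaFun (i : B) (p : W × ℤˣ) : W × ℤˣ :=
  (s i * p.1 * s i, p.2 * (if p.1 = s i then -1 else 1))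

lemma conj_simple_eq_iff (i : B) (x : W) : (s i * x * s i = s i) ↔ (x = s i) := by
  constructor
  · intro h
    have h2 : x = (s i)⁻¹ * (s i * x * s i) * (s i)⁻¹ := by group
    rw [h, cs.inv_simple, cs.simple_mul_simple_self] at h2
    rw [h2, one_mul]
  · rintro rfl
    rw [mul_assoc, cs.simple_mul_simple_self, mul_one]

lemma etaFun_involutive (i : B) : Function.Involutive (etaFun cs i) := by
  intro p
  unfold etaFun
  have h1 : s i * (s i * p.1 * s i) * s i = p.1 := by
    have : p.1 = (s i)⁻¹ * (s i * p.1 * s i) * (s i)⁻¹ := by group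
    rw [cs.inv_simple] at this
    exact this.symm
  refine Prod.ext h1 ?_
  simp only [conj_simple_eq_iff]
  rcases eq_or_ne p.1 (s i) with h | h <;> simp [h, mul_assoc]

/-- The permutation of `W × ℤˣ` associated to the simple reflection `i`. -/
def eta (i : B) : Equiv.Perm (W × ℤˣ) := (etaFun_involutive cs i).toPerm

lemma eta_apply (i : B) (p : W × ℤˣ) :
    eta cs i p = (s i * p.1 * s i, p.2 * (if p.1 = s i then -1 else 1)) := rfl

lemma conj_eq_iff (g x y : W) : g * x * g⁻¹ = y ↔ x = g⁻¹ * y * g := by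
  constructor
  · rintro rfl; group
  · rintro rfl; group

lemma simple_conj_eq_iff (i : B) (x y : W) : s i * x * s i = y ↔ x = s i * y * s i := by
  have h := conj_eq_iff (s i) x y
  rw [cs.inv_simple] at h
  exact h

lemma eta_mul_pow_apply (i j : B) (k : ℕ) (t : W) (ε : ℤˣ) :
    ((eta cs i * eta cs j) ^ k) (t, ε) =
      ((s i * s j) ^ k * t * ((s i * s j) ^ k)⁻¹,
        ε * ∏ l ∈ Finset.range (2 * k),
          (if t = s j * (s i * s j) ^ l then (-1 : ℤˣ) else 1)) := by
  set c := s i * s j with hc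
  have hkey : ∀ x : W, s i * (s j * x * s j) * s i = c * x * c⁻¹ := by
    intro x
    rw [hc, mul_inv_rev, cs.inv_simple, cs.inv_simple]
    group
  have hsemi : ∀ n : ℕ, s j * c ^ n = (c ^ n)⁻¹ * s j := by
    have h1 : SemiconjBy (s j) c c⁻¹ := by
      unfold SemiconjBy
      rw [hc, mul_inv_rev, cs.inv_simple, cs.inv_simple]
      group
    intro n
    have := (h1.pow_right n).eq
    rwa [inv_pow] at this
  have hconj : ∀ n : ℕ, (c ^ n)⁻¹ * s j * c ^ n = s j * c ^ (2 * n) := by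
    intro n
    rw [← hsemi n, mul_assoc, ← pow_add, two_mul]
  have hconj' : ∀ n : ℕ, (c ^ n)⁻¹ * (s j * (s i * s j)) * c ^ n = s j * c ^ (2 * n + 1) := by
    intro n
    have h2 : s j * (s i * s j) = c⁻¹ * s j := by
      rw [hc, mul_inv_rev, cs.inv_simple, cs.inv_simple]
      group
    rw [h2, ← mul_assoc, ← mul_inv_rev, ← pow_succ', ← hsemi (n + 1), mul_assoc, ← pow_add]
    have hn : n + 1 + n = 2 * n + 1 := by omega
    rw [hn]
  induction k with
  | zero => simp
  | succ k ih =>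
    rw [pow_succ', Equiv.Perm.mul_apply, ih, Equiv.Perm.mul_apply, eta_apply, eta_apply]
    simp only
    have hA : (c ^ k * t * (c ^ k)⁻¹ = s j) ↔ (t = s j * c ^ (2 * k)) := by
      rw [conj_eq_iff, hconj]
    have hB : (s j * (c ^ k * t * (c ^ k)⁻¹) * s j = s i) ↔ (t = s j * c ^ (2 * k + 1)) := by
      constructor
      · intro h
        have h2 := (simple_conj_eq_iff cs j _ (s i)).mp h
        rw [conj_eq_iff] at h2
        rw [show s j * s i * s j = s j * (s i * s j) from mul_assoc _ _ _, hconj'] at h2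
        exact h2
      · intro h
        have h2 : c ^ k * t * (c ^ k)⁻¹ = s j * (s i * s j) := by
          rw [conj_eq_iff, hconj', h]
        apply (simple_conj_eq_iff cs j _ (s i)).mpr
        rw [h2, mul_assoc]
    refine Prod.ext ?_ ?_
    · simp only
      rw [hkey]
      rw [pow_succ']
      group
    · simp only [hA, hB]
      have : 2 * (k + 1) = (2 * k) + 1 + 1 := by ring
      rw [this, Finset.prod_range_succ, Finset.prod_range_succ]
      rcases eq_or_ne t (s j * c ^ (2 * k)) with h1 | h1 <;>
        rcases eq_or_ne t (s j * c ^ (2 * k + 1)) with h2 | h2 <;>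
        simp [h1, h2] <;> ring

lemma eta_liftable : M.IsLiftable (eta cs) := by
  intro i j
  apply Equiv.ext
  rintro ⟨t, ε⟩
  rw [eta_mul_pow_apply]
  have hm : (s i * s j) ^ M i j = 1 := cs.simple_mul_simple_pow i j
  have hprod : ∏ l ∈ Finset.range (2 * M i j),
      (if t = s j * (s i * s j) ^ l then (-1 : ℤˣ) else 1) = 1 := by
    have h2 : 2 * M i j = M i j + M i j := two_mul _
    rw [h2, Finset.prod_range_add]
    have heq : ∀ x ∈ Finset.range (M i j),
        (if t = s j * (s i * s j) ^ (M i j + x) then (-1 : ℤˣ) else 1)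
          = (if t = s j * (s i * s j) ^ x then (-1 : ℤˣ) else 1) := by
      intro x _
      rw [pow_add, hm, one_mul]
    rw [Finset.prod_congr rfl heq, ← Finset.prod_mul_distrib]
    apply Finset.prod_eq_one
    intro x _
    rcases eq_or_ne t (s j * (s i * s j) ^ x) with h | h <;> simp [h]
  rw [hm, hprod]
  simp

/-- The sign representation homomorphism `W →* Perm (W × ℤˣ)`. -/
def phi : W →* Equiv.Perm (W × ℤˣ) := cs.lift ⟨eta cs, eta_liftable cs⟩

/-- `sgn cs w t = -1` iff `t` appears an odd number of times in any inversion sequence of `w`. -/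
def sgn (w t : W) : ℤˣ := ((phi cs w) (t, 1)).2

lemma phi_wordProd (ω : List B) (t : W) (ε : ℤˣ) :
    (phi cs (π ω)) (t, ε) = (π ω * t * (π ω)⁻¹, ε * (-1) ^ ((ris ω).count t)) := by
  induction ω generalizing t ε with
  | nil => simp [wordProd_nil]
  | cons i ω ih =>
    rw [cs.wordProd_cons, map_mul, Equiv.Perm.mul_apply, ih]
    have hphis : phi cs (s i) = eta cs i := cs.lift_apply_simple (eta_liftable cs) i
    rw [hphis, eta_apply]
    simp only
    have hcount : (ris (i :: ω)).count t
        = (if t = (π ω)⁻¹ * s i * π ω then 1 else 0) + (ris ω).count t := by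
      show ((π ω)⁻¹ * s i * π ω :: ris ω).count t = _
      rw [List.count_cons]
      rcases eq_or_ne t ((π ω)⁻¹ * s i * π ω) with h | h
      · simp [h, Nat.add_comm]
      · simp [h, Ne.symm h]
    refine Prod.ext ?_ ?_
    · simp only
      rw [mul_inv_rev, cs.inv_simple]
      group
    · simp only [hcount]
      have hiff : (π ω * t * (π ω)⁻¹ = s i) ↔ (t = (π ω)⁻¹ * s i * π ω) := by
        rw [conj_eq_iff]
      simp only [hiff]
      rcases eq_or_ne t ((π ω)⁻¹ * s i * π ω) with h | h <;> simp [h, pow_add] <;> ring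

lemma phi_apply (w t : W) (ε : ℤˣ) :
    (phi cs w) (t, ε) = (w * t * w⁻¹, ε * sgn cs w t) := by
  obtain ⟨ω, rfl⟩ := cs.wordProd_surjective w
  rw [phi_wordProd, sgn, phi_wordProd]
  simp

lemma sgn_wordProd (ω : List B) (t : W) :
    sgn cs (π ω) t = (-1) ^ ((ris ω).count t) := by
  rw [sgn, phi_wordProd]
  simp

lemma sgn_mul (a b t : W) :
    sgn cs (a * b) t = sgn cs b t * sgn cs a (b * t * b⁻¹) := by
  have h1 : (phi cs (a * b)) (t, 1) = (phi cs a) ((phi cs b) (t, 1)) := by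
    rw [map_mul]; rfl
  rw [phi_apply, phi_apply, phi_apply] at h1
  have := congrArg Prod.snd h1
  simpa using this

lemma sgn_simple (i : B) (t : W) :
    sgn cs (s i) t = if t = s i then -1 else 1 := by
  have h : sgn cs (π [i]) t = (-1) ^ ((ris [i]).count t) := sgn_wordProd cs [i] t
  rw [wordProd_singleton] at h
  rw [h, rightInvSeq_singleton]
  rcases eq_or_ne t (s i) with h2 | h2
  · simp [h2]
  · simp [h2, Ne.symm h2]

lemma sgn_refl_self_aux (ω : List B) (i : B) :
    sgn cs (π ω * s i * (π ω)⁻¹) (π ω * s i * (π ω)⁻¹) = -1 := by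
  induction ω with
  | nil =>
    simp only [wordProd_nil, one_mul, inv_one, mul_one]
    simp [sgn_simple cs i (s i)]
  | cons k ω ih =>
    have hx : π (k :: ω) * s i * (π (k :: ω))⁻¹
        = s k * (π ω * s i * (π ω)⁻¹) * s k := by
      rw [wordProd_cons, mul_inv_rev, cs.inv_simple]
      group
    set t := π ω * s i * (π ω)⁻¹ with htdef
    rw [hx]
    have e1 : s k * t * s k = (s k) * (t * s k) := by group
    have harg : (t * s k) * (s k * t * s k) * (t * s k)⁻¹ = t := by
      have e : (t * s k) * (s k * t * s k) * (t * s k)⁻¹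
          = t * ((s k * s k) * t * (s k * s k)) * t⁻¹ := by
        rw [mul_inv_rev, cs.inv_simple]; group
      simpa [cs.simple_mul_simple_self] using e
    have harg2 : s k * (s k * t * s k) * (s k)⁻¹ = t := by
      have e : s k * (s k * t * s k) * (s k)⁻¹ = (s k * s k) * t * (s k * s k) := by
        rw [cs.inv_simple]; group
      simpa [cs.simple_mul_simple_self] using e
    calc sgn cs (s k * t * s k) (s k * t * s k)
        = sgn cs ((s k) * (t * s k)) (s k * t * s k) := by rw [← e1]
      _ = sgn cs (t * s k) (s k * t * s k) * sgn cs (s k) t := by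
            rw [sgn_mul, harg]
      _ = (sgn cs (s k) (s k * t * s k) * sgn cs t t) * sgn cs (s k) t := by
            rw [sgn_mul, harg2]
      _ = -1 := by
            rw [ih, sgn_simple, sgn_simple]
            rcases eq_or_ne t (s k) with h | h
            · have h3 : s k * t * s k = s k := (conj_simple_eq_iff cs k t).mpr h
              simp [h, h3]
            · have h3 : ¬ (s k * t * s k = s k) := fun hh => h ((conj_simple_eq_iff cs k t).mp hh)
              simp [h, h3]

lemma sgn_refl_self {t : W} (ht : cs.IsReflection t) : sgn cs t t = -1 := by
  obtain ⟨x, i, rfl⟩ := ht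
  obtain ⟨ω, rfl⟩ := cs.wordProd_surjective x
  exact sgn_refl_self_aux cs ω i

/-- Strong exchange property (right version): any right inversion of `π ω` appears in the
right inversion sequence of a reduced word `ω`. -/
lemma mem_rightInvSeq_of_isRightInversion {ω : List B} (hω : cs.IsReduced ω) {t : W}
    (ht : cs.IsRightInversion (π ω) t) : t ∈ ris ω := by
  have hsgn : sgn cs (π ω) t = -1 := by
    rcases Int.units_eq_one_or (sgn cs (π ω) t) with h | h
    · exfalso
      have htt : t * t = 1 := ht.1.mul_self
      have hinv : t⁻¹ = t := ht.1.inv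
      have h2 : sgn cs (π ω * t) t = -1 := by
        rw [sgn_mul, sgn_refl_self cs ht.1]
        have : t * t * t⁻¹ = t := by group
        rw [this, h]
        simp
      obtain ⟨ρ, hρred, hρ⟩ := cs.exists_reduced_word' (π ω * t)
      rw [hρ, sgn_wordProd] at h2
      have hcount : (ris ρ).count t ≠ 0 := by
        intro hc
        rw [hc] at h2
        simp at h2
      have hmem : t ∈ ris ρ := by
        by_contra hmem
        exact hcount (List.count_eq_zero.mpr hmem)
      have hrinv := cs.isRightInversion_of_mem_rightInvSeq hρred hmem
      rw [← hρ] at hrinv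
      have : ℓ (π ω * t * t) < ℓ (π ω * t) := hrinv.2
      rw [mul_assoc, htt, mul_one] at this
      exact Nat.lt_asymm this ht.2
    · exact h
  rw [sgn_wordProd] at hsgn
  have hcount : (ris ω).count t ≠ 0 := by
    intro hc
    rw [hc] at hsgn
    simp at hsgn
  by_contra hmem
  exact hcount (List.count_eq_zero.mpr hmem)

/-- Strong exchange property (left version). -/
lemma mem_leftInvSeq_of_isLeftInversion {ω : List B} (hω : cs.IsReduced ω) {t : W}
    (ht : cs.IsLeftInversion (π ω) t) : t ∈ lis ω := by
  have h1 : cs.IsRightInversion (π ω)⁻¹ t := cs.isRightInversion_inv_iff.mpr ht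
  rw [← cs.wordProd_reverse] at h1
  have h2 := mem_rightInvSeq_of_isRightInversion cs ((cs.isReduced_reverse_iff ω).mpr hω) h1
  rw [cs.rightInvSeq_reverse] at h2
  simpa using h2

lemma exists_eraseIdx_of_isLeftInversion {ω : List B} (hω : cs.IsReduced ω) {t : W}
    (ht : cs.IsLeftInversion (π ω) t) : ∃ j, j < ω.length ∧ t * π ω = π (ω.eraseIdx j) := by
  have hmem := mem_leftInvSeq_of_isLeftInversion cs hω ht
  obtain ⟨j, hj, hget⟩ := List.mem_iff_getElem.mp hmem
  have hj' : j < ω.length := by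
    have := cs.length_leftInvSeq ω
    omega
  refine ⟨j, hj', ?_⟩
  rw [← cs.getD_leftInvSeq_mul_wordProd ω j]
  congr 1
  rw [← hget, List.getD_eq_getElem]


/-- Every word has a reduced sublist with the same product. -/
lemma exists_reduced_sublist_aux : ∀ (n : ℕ) (ω : List B), ω.length = n →
    ∃ σ, σ.Sublist ω ∧ cs.IsReduced σ ∧ π σ = π ω := by
  intro n
  induction n using Nat.strong_induction_on with
  | _ n ih =>
  intro ω hn
  by_cases hred : cs.IsReduced ω
  · exact ⟨ω, List.Sublist.refl ω, hred, rfl⟩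
  · have hPn : ¬ cs.IsReduced (ω.take ω.length) := by rwa [List.take_length]
    have hEx : ∃ k, ¬ cs.IsReduced (ω.take k) := ⟨ω.length, hPn⟩
    have hk₀ : ¬ cs.IsReduced (ω.take (Nat.find hEx)) := Nat.find_spec hEx
    have hmin : ∀ m, m < Nat.find hEx → cs.IsReduced (ω.take m) := by
      intro m hm
      by_contra hc
      have := Nat.find_le (h := hEx) hc
      omega
    have hk₀pos : Nat.find hEx ≠ 0 := by
      intro h0
      apply hk₀
      rw [h0, List.take_zero]
      show ℓ (π ([] : List B)) = _
      simp [cs.wordProd_nil]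
    obtain ⟨j, hk₀eq⟩ : ∃ j, Nat.find hEx = j + 1 := ⟨Nat.find hEx - 1, by omega⟩
    rw [hk₀eq] at hk₀
    have hk₀le : j + 1 ≤ ω.length := by
      have := Nat.find_le (h := hEx) hPn
      omega
    have hj : j < ω.length := by omega
    have hredj : cs.IsReduced (ω.take j) := hmin j (by omega)
    have htakesucc : ω.take (j + 1) = ω.take j ++ [ω[j]] := by
      rw [List.take_succ, List.getElem?_eq_getElem hj]
      rfl
    have hlenj : (ω.take j).length = j := by
      rw [List.length_take]; omega
    have hπsucc : π (ω.take (j + 1)) = π (ω.take j) * s ω[j] := by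
      rw [htakesucc, cs.wordProd_append, cs.wordProd_singleton]
    have hinv : cs.IsRightInversion (π (ω.take j)) (s ω[j]) := by
      refine ⟨cs.isReflection_simple _, ?_⟩
      rcases cs.length_mul_simple (π (ω.take j)) ω[j] with h | h
      · exfalso
        apply hk₀
        show ℓ (π (ω.take (j+1))) = (ω.take (j+1)).length
        rw [hπsucc, h, hredj, hlenj, List.length_take]
        omega
      · rw [hredj, hlenj] at h ⊢
        omega
    have hmem := mem_rightInvSeq_of_isRightInversion cs hredj hinv
    obtain ⟨l, hl, hget⟩ := List.mem_iff_getElem.mp hmem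
    have hl' : l < j := by
      have := cs.length_rightInvSeq (ω.take j)
      rw [this, hlenj] at hl
      exact hl
    have herase : π (ω.take j) * s ω[j] = π ((ω.take j).eraseIdx l) := by
      rw [← cs.wordProd_mul_getD_rightInvSeq (ω.take j) l]
      congr 1
      rw [← hget, List.getD_eq_getElem]
    set σ₀ := (ω.take j).eraseIdx l ++ ω.drop (j + 1) with hσ₀
    have hπσ₀ : π σ₀ = π ω := by
      rw [hσ₀, cs.wordProd_append, ← herase, ← hπsucc]
      rw [← cs.wordProd_append, List.take_append_drop]
    have hsub : σ₀.Sublist ω := by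
      have h1 : ((ω.take j).eraseIdx l).Sublist (ω.take (j+1)) := by
        refine List.Sublist.trans (List.eraseIdx_sublist _ l) ?_
        rw [htakesucc]
        exact List.sublist_append_left _ _
      have h2 := List.Sublist.append h1 (List.Sublist.refl (ω.drop (j+1)))
      rwa [List.take_append_drop] at h2
    have hlen : σ₀.length < n := by
      rw [hσ₀, List.length_append, List.length_eraseIdx, hlenj, List.length_drop]
      simp only [hl', if_true]
      omega
    obtain ⟨σ, hs1, hs2, hs3⟩ := ih σ₀.length hlen σ₀ rfl
    exact ⟨σ, hs1.trans hsub, hs2, by rw [hs3, hπσ₀]⟩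

lemma exists_reduced_sublist (ω : List B) :
    ∃ σ, σ.Sublist ω ∧ cs.IsReduced σ ∧ π σ = π ω :=
  exists_reduced_sublist_aux cs ω.length ω rfl

lemma bruhat_refl (a : W) : bruhatLE cs a a := Relation.ReflTransGen.refl

lemma bruhat_trans {a b c : W} (h1 : bruhatLE cs a b) (h2 : bruhatLE cs b c) :
    bruhatLE cs a c := Relation.ReflTransGen.trans h1 h2

lemma bruhat_single {a b : W} (t : W) (ht : cs.IsReflection t) (hb : b = t * a)
    (hl : ℓ a < ℓ b) : bruhatLE cs a b :=
  Relation.ReflTransGen.single ⟨⟨t, ht, hb⟩, hl⟩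

lemma bruhat_of_mul_left {t w : W} (ht : cs.IsReflection t) (hl : ℓ (t * w) < ℓ w) :
    bruhatLE cs (t * w) w := by
  refine bruhat_single cs t ht ?_ hl
  rw [← mul_assoc, ht.mul_self, one_mul]

lemma bruhat_of_mul_right {t w : W} (ht : cs.IsReflection t) (hl : ℓ (w * t) < ℓ w) :
    bruhatLE cs (w * t) w := by
  refine bruhat_single cs (w * t * w⁻¹) (ht.conj w) ?_ hl
  have h : (w * t * w⁻¹) * (w * t) = w * (t * t) := by group
  rw [ht.mul_self, mul_one] at h
  exact h.symm

lemma bruhat_step_simple {c b : W} (i : B) (t : W) (ht : cs.IsReflection t)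
    (hb : b = t * c) (hl : ℓ c < ℓ b) :
    bruhatLE cs (s i * c) b ∨ bruhatLE cs (s i * c) (s i * b) := by
  have hcb : bruhatLE cs c b := bruhat_single cs t ht hb hl
  have htb : t * b = c := by rw [hb, ← mul_assoc, ht.mul_self, one_mul]
  rcases cs.length_simple_mul c i with hsc | hsc
  · -- ℓ (s i * c) = ℓ c + 1
    rcases cs.length_simple_mul b i with hsb | hsb
    · -- ℓ (s i * b) = ℓ b + 1
      right
      refine bruhat_single cs (s i * t * (s i)⁻¹) (ht.conj (s i)) ?_ (by omega)
      rw [hb]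
      group
    · -- ℓ (s i * b) + 1 = ℓ b
      left
      obtain ⟨ρ, hρred, hρ⟩ := cs.exists_reduced_word' (s i * b)
      have hρlen : ℓ (s i * b) = ρ.length := by rw [hρ]; exact hρred
      have hcons : π (i :: ρ) = b := by
        rw [cs.wordProd_cons, ← hρ, cs.simple_mul_simple_cancel_left]
      have hconsred : cs.IsReduced (i :: ρ) := by
        show ℓ (π (i :: ρ)) = (i :: ρ).length
        rw [hcons, List.length_cons]
        omega
      have hltinv : cs.IsLeftInversion (π (i :: ρ)) t := by
        rw [hcons]
        exact ⟨ht, by rw [htb]; exact hl⟩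
      obtain ⟨j, hjlt, hje⟩ := exists_eraseIdx_of_isLeftInversion cs hconsred hltinv
      rw [hcons, htb] at hje
      rcases j with _ | j'
      · -- c = π ρ = s i * b
        rw [List.eraseIdx_cons_zero] at hje
        have h2 : s i * c = b := by rw [hje, ← hρ, cs.simple_mul_simple_cancel_left]
        rw [h2]
        exact bruhat_refl cs b
      · have hjρ : j' < ρ.length := by
          have hh : (i :: ρ).length = ρ.length + 1 := rfl
          omega
        rw [List.eraseIdx_cons_succ, cs.wordProd_cons] at hje
        have hsic : s i * c = π (ρ.eraseIdx j') := by
          rw [hje, cs.simple_mul_simple_cancel_left]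
        set r := (lis ρ).getD j' 1 with hr
        have hrmem : r ∈ lis ρ := by
          rw [hr, List.getD_eq_getElem _ _ (by rw [cs.length_leftInvSeq]; exact hjρ)]
          exact List.getElem_mem _
        have hrrefl := cs.isReflection_of_mem_leftInvSeq ρ hrmem
        have hrw : r * (s i * b) = π (ρ.eraseIdx j') := by
          rw [hρ]
          exact cs.getD_leftInvSeq_mul_wordProd ρ j'
        have hbb : s i * b = r * (s i * c) := by
          rw [hsic, ← hrw, ← mul_assoc, hrrefl.mul_self, one_mul]
        have hlen1 : ℓ (s i * c) < ℓ (s i * b) := by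
          have h1 : ℓ (π (ρ.eraseIdx j')) ≤ (ρ.eraseIdx j').length := cs.length_wordProd_le _
          have h2 : (ρ.eraseIdx j').length = ρ.length - 1 := by
            rw [List.length_eraseIdx]
            simp [hjρ]
          rw [hsic]
          omega
        exact (bruhat_single cs r hrrefl hbb hlen1).trans
          (bruhat_of_mul_left cs (cs.isReflection_simple i) (by omega))
  · -- ℓ (s i * c) + 1 = ℓ c
    left
    exact (bruhat_of_mul_left cs (cs.isReflection_simple i) (by omega)).trans hcb

lemma bruhat_simple_mul {a b : W} (h : bruhatLE cs a b) (i : B) :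
    bruhatLE cs (s i * a) b ∨ bruhatLE cs (s i * a) (s i * b) := by
  induction h with
  | refl => exact Or.inr (bruhat_refl cs _)
  | tail hab hstep ih =>
    obtain ⟨⟨t, ht, hbt⟩, hlt⟩ := hstep
    rcases ih with h1 | h1
    · exact Or.inl (h1.trans (bruhat_single cs t ht hbt hlt))
    · rcases bruhat_step_simple cs i t ht hbt hlt with h2 | h2
      · exact Or.inl (h1.trans h2)
      · exact Or.inr (h1.trans h2)

/-- Subword property, easy direction: a subword of a reduced word represents a smaller element. -/
lemma wordProd_sublist_le {σ ω : List B} (hσ : σ.Sublist ω) (hω : cs.IsReduced ω) :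
    bruhatLE cs (π σ) (π ω) := by
  induction ω generalizing σ with
  | nil =>
    rw [List.sublist_nil.mp hσ]
    exact bruhat_refl cs _
  | cons i ω ih =>
    have hωred : cs.IsReduced ω := by
      have := hω.drop 1
      simpa using this
    have hstep : bruhatLE cs (π ω) (π (i :: ω)) := by
      refine bruhat_single cs (s i) (cs.isReflection_simple i) (cs.wordProd_cons i ω) ?_
      have h1 : ℓ (π (i :: ω)) = ω.length + 1 := by
        rw [hω]; rfl
      have h2 : ℓ (π ω) = ω.length := hωred
      omega
    cases hσ with
    | cons _ h => exact (ih h hωred).trans hstep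
    | cons_cons _ h =>
      rw [cs.wordProd_cons, cs.wordProd_cons]
      rcases bruhat_simple_mul cs (ih h hωred) i with h1 | h1
      · have hstep' : bruhatLE cs (π ω) (s i * π ω) := by
          rw [← cs.wordProd_cons]
          exact hstep
        exact h1.trans hstep'
      · exact h1

/-- Subword property, hard direction: anything below `π ω` is the product of a reduced
sublist of `ω`. -/
lemma exists_sublist_of_le {x w : W} (h : bruhatLE cs x w) {ω : List B}
    (hω : cs.IsReduced ω) (hw : w = π ω) :
    ∃ σ, σ.Sublist ω ∧ cs.IsReduced σ ∧ π σ = x := by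
  induction h using Relation.ReflTransGen.head_induction_on with
  | refl => exact ⟨ω, List.Sublist.refl ω, hω, hw.symm⟩
  | head hstep hrest ih =>
    obtain ⟨⟨t, ht, hct⟩, hlt⟩ := hstep
    subst hct
    obtain ⟨σc, hsub, hred, hprod⟩ := ih
    have hinv : cs.IsLeftInversion (π σc) t := by
      rw [hprod]
      exact ⟨ht, by rw [← mul_assoc, ht.mul_self, one_mul]; exact hlt⟩
    obtain ⟨j, hjlt, hje⟩ := exists_eraseIdx_of_isLeftInversion cs hred hinv
    rw [hprod, ← mul_assoc, ht.mul_self, one_mul] at hje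
    obtain ⟨σ, hs1, hs2, hs3⟩ := exists_reduced_sublist cs (σc.eraseIdx j)
    exact ⟨σ, (hs1.trans (List.eraseIdx_sublist σc j)).trans hsub, hs2, by
      rw [hs3]; exact hje.symm⟩

variable (J : Set B)

lemma wordProd_mem_parabolic {ω : List B} (hω : ∀ b ∈ ω, b ∈ J) :
    π ω ∈ parabolicSubgroup cs J := by
  induction ω with
  | nil => rw [cs.wordProd_nil]; exact one_mem _
  | cons i ω ih =>
    rw [cs.wordProd_cons]
    exact mul_mem (Subgroup.subset_closure ⟨i, hω i (List.mem_cons_self (a := i) (l := ω)), rfl⟩)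
      (ih fun b hb => hω b (List.mem_cons_of_mem i hb))

lemma exists_J_word_of_mem {x : W} (hx : x ∈ parabolicSubgroup cs J) :
    ∃ ω : List B, (∀ b ∈ ω, b ∈ J) ∧ π ω = x := by
  induction hx using Subgroup.closure_induction with
  | mem y hy =>
    obtain ⟨b, hb, rfl⟩ := hy
    exact ⟨[b], by simp [hb], cs.wordProd_singleton b⟩
  | one => exact ⟨[], by simp, cs.wordProd_nil⟩
  | mul y z hy hz ihy ihz =>
    obtain ⟨ω₁, h1, e1⟩ := ihy
    obtain ⟨ω₂, h2, e2⟩ := ihz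
    refine ⟨ω₁ ++ ω₂, ?_, by rw [cs.wordProd_append, e1, e2]⟩
    intro b hb
    rcases List.mem_append.mp hb with h | h
    exacts [h1 b h, h2 b h]
  | inv y hy ihy =>
    obtain ⟨ω₁, h1, e1⟩ := ihy
    refine ⟨ω₁.reverse, ?_, by rw [cs.wordProd_reverse, e1]⟩
    intro b hb
    exact h1 b (List.mem_reverse.mp hb)

lemma exists_reduced_J_word {x : W} (hx : x ∈ parabolicSubgroup cs J) :
    ∃ ω : List B, (∀ b ∈ ω, b ∈ J) ∧ cs.IsReduced ω ∧ π ω = x := by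
  obtain ⟨ω, hJ, hπ⟩ := exists_J_word_of_mem cs J hx
  obtain ⟨σ, hsub, hred, hprod⟩ := exists_reduced_sublist cs ω
  exact ⟨σ, fun b hb => hJ b (hsub.subset hb), hred, by rw [hprod, hπ]⟩

lemma length_parabolic_mul_aux : ∀ n {y z : W}, ℓ y = n →
    y ∈ parabolicSubgroup cs J → z ∈ minCosetReps cs J → ℓ (y * z) = ℓ y + ℓ z := by
  intro n
  induction n using Nat.strong_induction_on with
  | _ n ih =>
  intro y z hn hy hz
  obtain ⟨κ, hκJ, hκred, hκπ⟩ := exists_reduced_J_word cs J hy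
  rcases κ with _ | ⟨j, κ'⟩
  · -- y = 1
    have : y = 1 := by rw [← hκπ, cs.wordProd_nil]
    rw [this]
    simp
  · have hylen : ℓ y = κ'.length + 1 := by
      rw [← hκπ, hκred]
      rfl
    have hκ'red : cs.IsReduced κ' := by
      have := hκred.drop 1
      simpa using this
    set y'' := π κ' with hy''
    have hy''P : y'' ∈ parabolicSubgroup cs J :=
      wordProd_mem_parabolic cs J fun b hb => hκJ b (List.mem_cons_of_mem j hb)
    have hy''len : ℓ y'' = κ'.length := hκ'red
    have hIH : ℓ (y'' * z) = ℓ y'' + ℓ z :=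
      ih κ'.length (by omega) hy''len hy''P hz
    have hyy : y = s j * y'' := by rw [← hκπ, cs.wordProd_cons]
    have hsj : ℓ (s j * y'') = κ'.length + 1 := by rw [← hyy]; exact hylen
    rw [hyy, mul_assoc]
    rcases cs.length_simple_mul (y'' * z) j with h | h
    · rw [h, hIH]
      omega
    · -- contradiction branch
      exfalso
      obtain ⟨ζ, hζred, hζπ⟩ := cs.exists_reduced_word' z
      have hζlen : ℓ z = ζ.length := by rw [hζπ]; exact hζred
      have happred : cs.IsReduced (κ' ++ ζ) := by
        show ℓ (π (κ' ++ ζ)) = _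
        rw [cs.wordProd_append, ← hy'', ← hζπ, hIH, List.length_append]
        omega
      have hinv : cs.IsLeftInversion (π (κ' ++ ζ)) (s j) := by
        rw [cs.wordProd_append, ← hy'', ← hζπ]
        exact ⟨cs.isReflection_simple j, by omega⟩
      obtain ⟨l, hllt, hle⟩ := exists_eraseIdx_of_isLeftInversion cs happred hinv
      rw [cs.wordProd_append, ← hy'', ← hζπ] at hle
      rw [List.length_append] at hllt
      rcases lt_or_ge l κ'.length with hcase | hcase
      · -- erased inside κ'
        rw [List.eraseIdx_append_of_lt_length hcase, cs.wordProd_append, ← hζπ] at hle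
        rw [← mul_assoc] at hle
        have hcancel : s j * y'' = π (κ'.eraseIdx l) := mul_right_cancel hle
        have hlb : ℓ (s j * y'') ≤ (κ'.eraseIdx l).length := by
          rw [hcancel]; exact cs.length_wordProd_le _
        have h2 : (κ'.eraseIdx l).length = κ'.length - 1 := by
          rw [List.length_eraseIdx]
          simp [hcase]
        have h3 : ℓ (s j * y'') = ℓ y := by rw [hyy]
        omega
      · -- erased inside ζ : contradicts minimality of z
        rw [List.eraseIdx_append_of_length_le hcase, cs.wordProd_append, ← hy''] at hle
        have hu : y''⁻¹ * s j * y'' ∈ parabolicSubgroup cs J := by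
          refine mul_mem (mul_mem (inv_mem hy''P) ?_) hy''P
          exact Subgroup.subset_closure ⟨j, hκJ j (List.mem_cons_self (a := j) (l := κ')), rfl⟩
        have hz2 : (y''⁻¹ * s j * y'') * z = π (ζ.eraseIdx (l - κ'.length)) := by
          calc (y''⁻¹ * s j * y'') * z = y''⁻¹ * (s j * (y'' * z)) := by group
            _ = y''⁻¹ * (y'' * π (ζ.eraseIdx (l - κ'.length))) := by rw [hle]
            _ = π (ζ.eraseIdx (l - κ'.length)) := by group
        have hmin := hz _ hu
        rw [hz2] at hmin
        have h1 : ℓ (π (ζ.eraseIdx (l - κ'.length))) ≤ (ζ.eraseIdx (l - κ'.length)).length :=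
          cs.length_wordProd_le _
        have h2 : (ζ.eraseIdx (l - κ'.length)).length = ζ.length - 1 := by
          rw [List.length_eraseIdx]
          have : l - κ'.length < ζ.length := by omega
          simp [this]
        omega

lemma length_parabolic_mul {y z : W} (hy : y ∈ parabolicSubgroup cs J)
    (hz : z ∈ minCosetReps cs J) : ℓ (y * z) = ℓ y + ℓ z :=
  length_parabolic_mul_aux cs J (ℓ y) rfl hy hz

lemma exists_decomp (x : W) :
    ∃ y z : W, y ∈ parabolicSubgroup cs J ∧ z ∈ minCosetReps cs J ∧ x = y * z := by
  have hne : {n : ℕ | ∃ u ∈ parabolicSubgroup cs J, ℓ (u * x) = n}.Nonempty :=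
    ⟨ℓ (1 * x), 1, one_mem _, rfl⟩
  obtain ⟨u₀, hu₀, hu₀len⟩ := Nat.sInf_mem hne
  refine ⟨u₀⁻¹, u₀ * x, inv_mem hu₀, ?_, by group⟩
  intro u' hu'
  rw [← mul_assoc]
  rw [hu₀len]
  exact Nat.sInf_le ⟨u' * u₀, mul_mem hu' hu₀, rfl⟩

lemma decomp_unique {y z y' z' : W} (hy : y ∈ parabolicSubgroup cs J)
    (hz : z ∈ minCosetReps cs J) (hy' : y' ∈ parabolicSubgroup cs J)
    (hz' : z' ∈ minCosetReps cs J) (heq : y * z = y' * z') : y = y' ∧ z = z' := by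
  set u := y'⁻¹ * y with hu
  have huP : u ∈ parabolicSubgroup cs J := mul_mem (inv_mem hy') hy
  have huz : u * z = z' := by rw [hu, mul_assoc, heq]; group
  have h1 : ℓ z' = ℓ u + ℓ z := by rw [← huz]; exact length_parabolic_mul cs J huP hz
  have huz' : u⁻¹ * z' = z := by rw [← huz]; group
  have h2 : ℓ z = ℓ u⁻¹ + ℓ z' := by
    rw [← huz']; exact length_parabolic_mul cs J (inv_mem huP) hz'
  rw [cs.length_inv] at h2
  have hu0 : ℓ u = 0 := by omega
  have hu1 : u = 1 := cs.length_eq_zero_iff.mp hu0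
  constructor
  · exact (inv_mul_eq_one.mp (by rw [← hu]; exact hu1)).symm
  · rw [← huz, hu1, one_mul]

/-- Both parts of a parabolic decomposition lie below the product in Bruhat order. -/
lemma decomp_le_parts {y z : W} (hy : y ∈ parabolicSubgroup cs J) (hz : z ∈ minCosetReps cs J) :
    bruhatLE cs y (y * z) ∧ bruhatLE cs z (y * z) := by
  obtain ⟨κ, hκJ, hκred, hκπ⟩ := exists_reduced_J_word cs J hy
  obtain ⟨ζ, hζred, hζπ⟩ := cs.exists_reduced_word' z
  have hπ : π (κ ++ ζ) = y * z := by rw [cs.wordProd_append, hκπ, ← hζπ]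
  have hred : cs.IsReduced (κ ++ ζ) := by
    show ℓ (π (κ ++ ζ)) = _
    rw [hπ, length_parabolic_mul cs J hy hz, List.length_append]
    have h1 : ℓ y = κ.length := by rw [← hκπ]; exact hκred
    have h2 : ℓ z = ζ.length := by rw [hζπ]; exact hζred
    omega
  constructor
  · have := wordProd_sublist_le cs (List.sublist_append_left κ ζ) hred
    rwa [hκπ, hπ] at this
  · have := wordProd_sublist_le cs (List.sublist_append_right κ ζ) hred
    rwa [← hζπ, hπ] at this

end

end CoxAux

/-- parabolic decomposition gives a length-additive bijection
`{x ≤ w} ≃ {y ∈ W_J : y ≤ u} × {z ∈ W^J : z ≤ v}` when `u = m(w,J)`. -/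
theorem parabolic_decomposition_bijection
    [Finite W] (cs : CoxeterSystem M W) (J : Set B) (w u v : W)
    (hu : u ∈ parabolicSubgroup cs J) (hv : v ∈ minCosetReps cs J)
    (hw : w = u * v) (hl : cs.length w = cs.length u + cs.length v)
    (hmax : ∀ y ∈ parabolicSubgroup cs J, bruhatLE cs y w → bruhatLE cs y u) :
    ∃ f : {x : W // bruhatLE cs x w} →
        {y : W // y ∈ parabolicSubgroup cs J ∧ bruhatLE cs y u} ×
        {z : W // z ∈ minCosetReps cs J ∧ bruhatLE cs z v},
      Function.Bijective f ∧
      ∀ x : {x : W // bruhatLE cs x w},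
        (x : W) = (f x).1 * (f x).2 ∧
        cs.length x = cs.length ((f x).1 : W) + cs.length ((f x).2 : W) := by
  classical
  obtain ⟨κ, hκJ, hκred, hκπ⟩ := CoxAux.exists_reduced_J_word cs J hu
  obtain ⟨ζ, hζred, hζπ⟩ := cs.exists_reduced_word' v
  have hκlen : cs.length u = κ.length := by rw [← hκπ]; exact hκred
  have hζlen : cs.length v = ζ.length := by rw [hζπ]; exact hζred
  have hwπ : w = cs.wordProd (κ ++ ζ) := by rw [cs.wordProd_append, hκπ, ← hζπ, hw]
  have hwred : cs.IsReduced (κ ++ ζ) := by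
    show cs.length (cs.wordProd (κ ++ ζ)) = _
    rw [← hwπ, hl, List.length_append]
    omega
  have hdec : ∀ x : W, ∃ p : W × W, p.1 ∈ parabolicSubgroup cs J ∧
      p.2 ∈ minCosetReps cs J ∧ x = p.1 * p.2 := by
    intro x
    obtain ⟨y, z, h1, h2, h3⟩ := CoxAux.exists_decomp cs J x
    exact ⟨(y, z), h1, h2, h3⟩
  set g : W → W × W := fun x => (hdec x).choose with hg
  have hg1 : ∀ x, (g x).1 ∈ parabolicSubgroup cs J := fun x => (hdec x).choose_spec.1
  have hg2 : ∀ x, (g x).2 ∈ minCosetReps cs J := fun x => (hdec x).choose_spec.2.1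
  have hg3 : ∀ x, x = (g x).1 * (g x).2 := fun x => (hdec x).choose_spec.2.2
  have hglen : ∀ x, cs.length x = cs.length (g x).1 + cs.length (g x).2 := fun x => by
    calc cs.length x = cs.length ((g x).1 * (g x).2) := by rw [← hg3 x]
      _ = _ := CoxAux.length_parabolic_mul cs J (hg1 x) (hg2 x)
  have hgdet : ∀ y z, y ∈ parabolicSubgroup cs J → z ∈ minCosetReps cs J →
      g (y * z) = (y, z) := by
    intro y z hy hz
    obtain ⟨h1, h2⟩ := CoxAux.decomp_unique cs J (hg1 (y * z)) (hg2 (y * z)) hy hz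
      (hg3 (y * z)).symm
    exact Prod.ext h1 h2
  have key : ∀ x : W, bruhatLE cs x w → bruhatLE cs (g x).1 u ∧ bruhatLE cs (g x).2 v := by
    intro x hx
    have hparts := CoxAux.decomp_le_parts cs J (hg1 x) (hg2 x)
    rw [← hg3 x] at hparts
    constructor
    · exact hmax _ (hg1 x) (hparts.1.trans hx)
    · obtain ⟨σ, hσsub, hσred, hσπ⟩ := CoxAux.exists_sublist_of_le cs hx hwred hwπ
      obtain ⟨σ₁, σ₂, rfl, hs1, hs2⟩ := List.sublist_append_iff.mp hσsub
      have hσ1P : cs.wordProd σ₁ ∈ parabolicSubgroup cs J :=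
        CoxAux.wordProd_mem_parabolic cs J fun b hb => hκJ b (hs1.subset hb)
      have hx2 : x = (cs.wordProd σ₁ * (g (cs.wordProd σ₂)).1) * (g (cs.wordProd σ₂)).2 := by
        rw [mul_assoc, ← hg3 (cs.wordProd σ₂), ← cs.wordProd_append, hσπ]
      obtain ⟨-, huniq2⟩ := CoxAux.decomp_unique cs J (hg1 x) (hg2 x)
        (mul_mem hσ1P (hg1 (cs.wordProd σ₂))) (hg2 (cs.wordProd σ₂))
        (by rw [← hg3 x, ← hx2])
      have hπσ₂v : bruhatLE cs (cs.wordProd σ₂) v := by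
        have := CoxAux.wordProd_sublist_le cs hs2 hζred
        rwa [← hζπ] at this
      have hz2le : bruhatLE cs (g (cs.wordProd σ₂)).2 (cs.wordProd σ₂) := by
        have := (CoxAux.decomp_le_parts cs J (hg1 (cs.wordProd σ₂)) (hg2 (cs.wordProd σ₂))).2
        rwa [← hg3 (cs.wordProd σ₂)] at this
      rw [huniq2]
      exact hz2le.trans hπσ₂v
  refine ⟨fun x => (⟨(g x.1).1, hg1 x.1, (key x.1 x.2).1⟩, ⟨(g x.1).2, hg2 x.1, (key x.1 x.2).2⟩),
    ⟨?_, ?_⟩, ?_⟩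
  · -- injective
    intro x₁ x₂ h
    have h1 : (g x₁.1).1 = (g x₂.1).1 := congrArg (fun p => (p.1 : W)) h
    have h2 : (g x₁.1).2 = (g x₂.1).2 := congrArg (fun p => (p.2 : W)) h
    apply Subtype.ext
    rw [hg3 x₁.1, hg3 x₂.1, h1, h2]
  · -- surjective
    rintro ⟨⟨y, hyP, hyu⟩, ⟨z, hzR, hzv⟩⟩
    obtain ⟨σ₁, hσ₁sub, hσ₁red, hσ₁π⟩ := CoxAux.exists_sublist_of_le cs hyu hκred hκπ.symm
    obtain ⟨σ₂, hσ₂sub, hσ₂red, hσ₂π⟩ := CoxAux.exists_sublist_of_le cs hzv hζred hζπ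
    have hle : bruhatLE cs (y * z) w := by
      have := CoxAux.wordProd_sublist_le cs (hσ₁sub.append hσ₂sub) hwred
      rwa [cs.wordProd_append, hσ₁π, hσ₂π, ← hwπ] at this
    refine ⟨⟨y * z, hle⟩, ?_⟩
    have hgyz := hgdet y z hyP hzR
    have e1 : (g (y * z)).1 = y := by rw [hgyz]
    have e2 : (g (y * z)).2 = z := by rw [hgyz]
    refine Prod.ext ?_ ?_
    · exact Subtype.ext e1
    · exact Subtype.ext e2
  · -- product and length
    intro x
    exact ⟨hg3 x.1, hglen x.1⟩
end
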